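/- arXiv:math-ph/0304016 — 3 statements merged into one kernel-verified Lean document; each statement's English description precedes it below -/
import Mathlib

section
/- Orthogonality of the Uvarov determinant polynomial: the polynomial q(t) given by the determinant with rows (h_{n−m}(εᵢ),…,h_n(εᵢ)), i = 1,…,m, and last row (π_{n−m}(t),…,π_n(t)), satisfies ∫ q(t)/(t − ε_j) dα(t) = 0 for each j = 1,…,m, and ∫ t^k q(t) dα^{[0,m]}(t) = 0 for 0 ≤ k < n, where dα^{[0,m]}(t) = dα(t)/∏_{j}(ε_j − t). -/
open MeasureTheory Polynomial Matrix
open scoped NNReal ENNReal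

lemma uv_integrable {E : Type*} [NormedAddCommGroup E] (α : Measure ℝ) [IsFiniteMeasure α] (Q : ℝ)
    (hQ : α (Set.Icc (-Q) Q)ᶜ = 0) {f : ℝ → E} (hm : AEStronglyMeasurable f α)
    (hc : ContinuousOn f (Set.Icc (-Q) Q)) : Integrable f α := by
  obtain ⟨C, hC⟩ := (isCompact_Icc (a := -Q) (b := Q)).exists_bound_of_continuousOn hc
  refine (integrable_const C).mono' hm ?_
  have hae : ∀ᵐ t ∂α, t ∈ Set.Icc (-Q) Q := by
    rw [ae_iff]; exact hQ
  filter_upwards [hae] with t ht using hC t ht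

lemma uv_ae (α : Measure ℝ) (Q : ℝ) (hQ : α (Set.Icc (-Q) Q)ᶜ = 0) :
    ∀ᵐ t ∂α, t ∈ Set.Icc (-Q) Q := by
  rw [ae_iff]; exact hQ

lemma uv_int_cauchy (α : Measure ℝ) [IsFiniteMeasure α] (Q : ℝ)
    (hQ : α (Set.Icc (-Q) Q)ᶜ = 0) (p : Polynomial ℝ) (e : ℝ) (he : Q < e) :
    Integrable (fun t => (↑(p.eval t) : ℂ) / ((t : ℂ) - (e : ℂ))) α := by
  apply uv_integrable α Q hQ
  · apply Measurable.aestronglyMeasurable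
    exact (Complex.measurable_ofReal.comp p.continuous_aeval.measurable).div
      ((Complex.continuous_ofReal.sub continuous_const).measurable)
  · apply ContinuousOn.div
    · exact (Complex.continuous_ofReal.comp p.continuous_aeval).continuousOn
    · exact (Complex.continuous_ofReal.sub continuous_const).continuousOn
    · intro t ht
      have : (t : ℝ) ≠ e := by
        have := ht.2; intro hte; rw [hte] at this; linarith
      simp only [sub_ne_zero]
      exact_mod_cast fun hc => this (Complex.ofReal_injective hc)

lemma uv_int_div (α : Measure ℝ) [IsFiniteMeasure α] (Q : ℝ)
    (hQ : α (Set.Icc (-Q) Q)ᶜ = 0) {f : ℝ → ℂ} (hf : Continuous f) (e : ℝ) (he : Q < e) :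
    Integrable (fun t => f t / ((t : ℂ) - (e : ℂ))) α := by
  apply uv_integrable α Q hQ
  · apply Measurable.aestronglyMeasurable
    exact hf.measurable.div ((Complex.continuous_ofReal.sub continuous_const).measurable)
  · apply ContinuousOn.div
    · exact hf.continuousOn
    · exact (Complex.continuous_ofReal.sub continuous_const).continuousOn
    · intro t ht
      have : (t : ℝ) ≠ e := by
        have := ht.2; intro hte; rw [hte] at this; linarith
      simp only [sub_ne_zero]
      exact_mod_cast fun hc => this (Complex.ofReal_injective hc)

lemma uv_int_polyeval (α : Measure ℝ) [IsFiniteMeasure α] (Q : ℝ)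
    (hQ : α (Set.Icc (-Q) Q)ᶜ = 0) (p : Polynomial ℝ) :
    Integrable (fun t => p.eval t) α :=
  uv_integrable α Q hQ (p.continuous_aeval.aestronglyMeasurable)
    (p.continuous_aeval.continuousOn)

lemma uv_int_polymul (α : Measure ℝ) [IsFiniteMeasure α] (Q : ℝ)
    (hQ : α (Set.Icc (-Q) Q)ᶜ = 0) (p r : Polynomial ℝ) :
    Integrable (fun t => p.eval t * r.eval t) α := by
  have := uv_int_polyeval α Q hQ (p * r)
  simpa [eval_mul] using this

lemma uv_orth_lowdeg (α : Measure ℝ) [IsFiniteMeasure α] (Q : ℝ)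
    (hQ : α (Set.Icc (-Q) Q)ᶜ = 0) (π : ℕ → Polynomial ℝ)
    (hmonic : ∀ j, (π j).Monic) (hdeg : ∀ j, (π j).natDegree = j)
    (horth : ∀ j k, j ≠ k → ∫ t, (π j).eval t * (π k).eval t ∂α = 0) :
    ∀ (p : Polynomial ℝ) (l : ℕ), p.degree < l → ∫ t, p.eval t * (π l).eval t ∂α = 0 := by
  suffices H : ∀ N (p : Polynomial ℝ), p.natDegree ≤ N → ∀ l : ℕ, p.degree < l →
      ∫ t, p.eval t * (π l).eval t ∂α = 0 by
    intro p l hl; exact H p.natDegree p le_rfl l hl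
  intro N
  induction N with
  | zero =>
    intro p hp l hl
    by_cases hp0 : p = 0
    · simp [hp0]
    have hd0 : p.natDegree = 0 := Nat.le_zero.mp hp
    have hl0 : 0 < l := by
      by_contra hc
      push_neg at hc
      interval_cases l
      simp [degree_eq_natDegree hp0, hd0] at hl
    have hπ0 : π 0 = 1 := by
      have := hmonic 0
      have h0 : (π 0).natDegree = 0 := hdeg 0
      rw [Polynomial.eq_one_of_monic_natDegree_zero this h0]
    have hpc : p = C (p.coeff 0) := (Polynomial.eq_C_of_natDegree_eq_zero hd0)
    calc ∫ t, p.eval t * (π l).eval t ∂α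
        = ∫ t, p.coeff 0 * ((π 0).eval t * (π l).eval t) ∂α := by
          congr 1; funext t; rw [hpc]; simp [hπ0]
      _ = p.coeff 0 * ∫ t, (π 0).eval t * (π l).eval t ∂α := by
          rw [integral_const_mul]
      _ = 0 := by rw [horth 0 l (by omega)]; ring
  | succ N ih =>
    intro p hp l hl
    by_cases hp0 : p = 0
    · simp [hp0]
    set d := p.natDegree with hd
    have hdl : d < l := by
      rwa [← Polynomial.natDegree_lt_iff_degree_lt hp0] at hl
    set q0 : Polynomial ℝ := C p.leadingCoeff * π d with hq0
    have hq0deg : q0.degree = p.degree := by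
      rw [hq0, degree_C_mul (Polynomial.leadingCoeff_ne_zero.mpr hp0),
        degree_eq_natDegree (hmonic d).ne_zero, hdeg d,
        degree_eq_natDegree hp0]
    have hq0lc : q0.leadingCoeff = p.leadingCoeff := by
      rw [hq0, leadingCoeff_mul, leadingCoeff_C, (hmonic d).leadingCoeff, mul_one]
    have hsub : (p - q0).degree < p.degree :=
      Polynomial.degree_sub_lt hq0deg.symm hp0 hq0lc.symm
    have hsubN : (p - q0).natDegree ≤ N := by
      by_cases hz : p - q0 = 0
      · simp [hz]
      have : (p - q0).natDegree < p.natDegree := Polynomial.natDegree_lt_natDegree hz hsub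
      omega
    have hsubl : (p - q0).degree < l := lt_trans hsub hl
    have key : ∫ t, (p - q0).eval t * (π l).eval t ∂α = 0 := ih (p - q0) hsubN l hsubl
    have hq0int : ∫ t, q0.eval t * (π l).eval t ∂α = 0 := by
      calc ∫ t, q0.eval t * (π l).eval t ∂α
          = ∫ t, p.leadingCoeff * ((π d).eval t * (π l).eval t) ∂α := by
            congr 1; funext t; rw [hq0]; simp; ring
        _ = p.leadingCoeff * ∫ t, (π d).eval t * (π l).eval t ∂α := integral_const_mul _ _
        _ = 0 := by rw [horth d l (by omega)]; ring
    have hsplit : ∫ t, p.eval t * (π l).eval t ∂α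
        = (∫ t, (p - q0).eval t * (π l).eval t ∂α) + ∫ t, q0.eval t * (π l).eval t ∂α := by
      rw [← integral_add (uv_int_polymul α Q hQ _ _) (uv_int_polymul α Q hQ _ _)]
      congr 1; funext t; simp [eval_sub]; ring
    rw [hsplit, key, hq0int, add_zero]


/-- Orthogonality of the Uvarov determinant polynomial: `q(t)` is orthogonal to
`1/(t - ε_j)` w.r.t. `dα` and to `t^k`, `k < n`, w.r.t. `dα^{[0,m]}`. -/
theorem uvarov_determinant_poly_orthogonal (α : Measure ℝ) [IsFiniteMeasure α] (Q : ℝ)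
    (hQ : α (Set.Icc (-Q) Q)ᶜ = 0)
    (hposdef : ∀ p : Polynomial ℝ, p ≠ 0 → 0 < ∫ t, (p.eval t) ^ 2 ∂α)
    (π : ℕ → Polynomial ℝ)
    (hmonic : ∀ j, (π j).Monic) (hdeg : ∀ j, (π j).natDegree = j)
    (horth : ∀ j k, j ≠ k → ∫ t, (π j).eval t * (π k).eval t ∂α = 0)
    -- Cauchy transforms h_k(ε) = (1/2πi) ∫ π_k(t)/(t-ε) dα(t)
    (h : ℕ → ℝ → ℂ)
    (hh : ∀ k e, h k e =
      (1 / (2 * (Real.pi : ℂ) * Complex.I)) *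
        ∫ t, Complex.ofReal ((π k).eval t) / ((t : ℂ) - (e : ℂ)) ∂α)
    (m n : ℕ) (hmn : m ≤ n)
    (ε : Fin m → ℝ) (hε : Function.Injective ε) (hεQ : ∀ i, Q < ε i)
    -- the modified measure dα^{[0,m]}(t) = ∏_j (ε_j - t)⁻¹ dα(t)
    (α' : Measure ℝ)
    (hα' : α' = α.withDensity (fun t => ENNReal.ofReal (∏ j, (ε j - t))⁻¹))
    -- the Uvarov determinant polynomial
    (q : ℝ → ℂ)
    (hq : q = fun t =>
      (Matrix.of fun i j : Fin (m + 1) =>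
        if hi : (i : ℕ) < m then h (n - m + j) (ε ⟨i, hi⟩)
        else Complex.ofReal ((π (n - m + j)).eval t)).det) :
    (∀ j : Fin m, ∫ t, q t / ((t : ℂ) - (ε j : ℂ)) ∂α = 0) ∧
    (∀ k < n, ∫ t, ((t : ℂ)) ^ k * q t ∂α' = 0) := by
  have h2πi : (2 * (Real.pi : ℂ) * Complex.I) ≠ 0 := by
    simp [Real.pi_ne_zero, Complex.I_ne_zero, Complex.ofReal_ne_zero]
  have hint : ∀ k (e : ℝ), ∫ t, Complex.ofReal ((π k).eval t) / ((t : ℂ) - (e : ℂ)) ∂α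
      = 2 * (Real.pi : ℂ) * Complex.I * h k e := by
    intro k e
    rw [hh k e]
    field_simp
  -- minor determinants
  set D : Fin (m + 1) → ℂ := fun j =>
    (Matrix.of fun i k : Fin m => h (n - m + ((j.succAbove k : Fin (m+1)) : ℕ)) (ε i)).det with hD
  -- expansion of q
  have hqexp : ∀ t, q t = ∑ j : Fin (m+1),
      (-1 : ℂ) ^ (m + (j : ℕ)) * Complex.ofReal ((π (n - m + (j:ℕ))).eval t) * D j := by
    intro t
    simp only [hq]
    rw [Matrix.det_succ_row _ (Fin.last m)]
    refine Finset.sum_congr rfl fun j _ => ?_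
    have h1 : (Matrix.of fun i j : Fin (m + 1) =>
        if hi : (i : ℕ) < m then h (n - m + j) (ε ⟨i, hi⟩)
        else Complex.ofReal ((π (n - m + j)).eval t)) (Fin.last m) j
        = Complex.ofReal ((π (n - m + (j:ℕ))).eval t) := by
      simp [Matrix.of_apply]
    have h2 : ((Matrix.of fun i j : Fin (m + 1) =>
        if hi : (i : ℕ) < m then h (n - m + j) (ε ⟨i, hi⟩)
        else Complex.ofReal ((π (n - m + j)).eval t)).submatrix
          (Fin.last m).succAbove j.succAbove)
        = Matrix.of fun i k : Fin m => h (n - m + ((j.succAbove k : Fin (m+1)) : ℕ)) (ε i) := by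
      ext i k
      rw [Fin.succAbove_last]
      simp [Matrix.submatrix, Matrix.of_apply, i.is_lt]
    rw [h1, h2]
    simp [hD]
  -- Part 1
  have part1 : ∀ j0 : Fin m, ∫ t, q t / ((t : ℂ) - (ε j0 : ℂ)) ∂α = 0 := by
    intro j0
    -- the matrix with the last row replaced by row j0
    set M' : Matrix (Fin (m+1)) (Fin (m+1)) ℂ := Matrix.of fun r j : Fin (m+1) =>
      if hr : (r : ℕ) < m then h (n - m + (j:ℕ)) (ε ⟨r, hr⟩) else h (n - m + (j:ℕ)) (ε j0)
      with hM'
    have hM'det : M'.det = 0 := by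
      apply Matrix.det_zero_of_row_eq (i := Fin.castSucc j0) (j := Fin.last m)
        (Fin.ne_of_lt (Fin.castSucc_lt_last j0))
      funext j
      simp [hM', Matrix.of_apply, j0.is_lt]
    have hM'exp : M'.det = ∑ j : Fin (m+1),
        (-1 : ℂ) ^ (m + (j : ℕ)) * h (n - m + (j:ℕ)) (ε j0) * D j := by
      rw [Matrix.det_succ_row _ (Fin.last m)]
      refine Finset.sum_congr rfl fun j _ => ?_
      have h1 : M' (Fin.last m) j = h (n - m + (j:ℕ)) (ε j0) := by
        simp [hM', Matrix.of_apply]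
      have h2 : (M'.submatrix (Fin.last m).succAbove j.succAbove)
          = Matrix.of fun i k : Fin m => h (n - m + ((j.succAbove k : Fin (m+1)) : ℕ)) (ε i) := by
        ext i k
        rw [Fin.succAbove_last]
        simp [hM', Matrix.submatrix, Matrix.of_apply, i.is_lt]
      rw [h1, h2]
      simp [hD]
    have hfun : (fun t => q t / ((t : ℂ) - (ε j0 : ℂ)))
        = fun t => ∑ j : Fin (m+1), ((-1 : ℂ) ^ (m + (j : ℕ)) * D j) *
            (Complex.ofReal ((π (n - m + (j:ℕ))).eval t) / ((t : ℂ) - (ε j0 : ℂ))) := by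
      funext t
      rw [hqexp t, Finset.sum_div]
      refine Finset.sum_congr rfl fun j _ => ?_
      ring
    rw [hfun, integral_finset_sum _ (fun j _ =>
      ((uv_int_cauchy α Q hQ _ _ (hεQ j0)).const_mul _))]
    have heach : ∀ j : Fin (m+1),
        ∫ t, ((-1 : ℂ) ^ (m + (j : ℕ)) * D j) *
            (Complex.ofReal ((π (n - m + (j:ℕ))).eval t) / ((t : ℂ) - (ε j0 : ℂ))) ∂α
        = ((-1 : ℂ) ^ (m + (j : ℕ)) * D j) *
            (2 * (Real.pi : ℂ) * Complex.I * h (n - m + (j:ℕ)) (ε j0)) := by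
      intro j
      rw [integral_const_mul, hint]
    rw [Finset.sum_congr rfl (fun j _ => heach j)]
    have : ∑ j : Fin (m+1), ((-1 : ℂ) ^ (m + (j : ℕ)) * D j) *
        (2 * (Real.pi : ℂ) * Complex.I * h (n - m + (j:ℕ)) (ε j0))
        = 2 * (Real.pi : ℂ) * Complex.I * M'.det := by
      rw [hM'exp, Finset.mul_sum]
      refine Finset.sum_congr rfl fun j _ => ?_
      ring
    rw [this, hM'det, mul_zero]
  refine ⟨part1, ?_⟩
  -- Part 2
  intro k hk
  -- continuity of q
  have hqc : Continuous q := by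
    rw [funext hqexp]
    exact continuous_finset_sum _ fun j _ =>
      (continuous_const.mul (Complex.continuous_ofReal.comp (π _).continuous_aeval)).mul
        continuous_const
  set w : ℝ → ℝ := fun t => ∏ j, (ε j - t) with hw
  have hwcont : Continuous w :=
    continuous_finset_prod _ fun j _ => continuous_const.sub continuous_id
  have hwpos : ∀ t ∈ Set.Icc (-Q) Q, 0 < w t := by
    intro t ht
    exact Finset.prod_pos fun j _ => by have h1 := hεQ j; have h2 := ht.2; linarith
  -- polynomial division
  set V : Polynomial ℝ := ∏ j : Fin m, (X - C (ε j)) with hV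
  have hVmonic : V.Monic := monic_prod_of_monic _ _ fun j _ => monic_X_sub_C _
  have hVdeg : V.natDegree = m := by
    rw [hV, natDegree_prod _ _ (fun j _ => X_sub_C_ne_zero _)]
    simp
  set P1 : Polynomial ℝ := (X ^ k : Polynomial ℝ) /ₘ V with hP1
  set R1 : Polynomial ℝ := (X ^ k : Polynomial ℝ) %ₘ V with hR1
  have hXk : ∀ t : ℝ, t ^ k = R1.eval t + V.eval t * P1.eval t := by
    intro t
    conv_lhs => rw [show (t : ℝ) ^ k = ((X ^ k : Polynomial ℝ)).eval t by simp,
      ← modByMonic_add_div (X ^ k : Polynomial ℝ) V]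
    simp
    rfl
  have hR1deg : R1.degree < (m : WithBot ℕ) := by
    have := degree_modByMonic_lt (X ^ k : Polynomial ℝ) hVmonic
    rwa [degree_eq_natDegree hVmonic.ne_zero, hVdeg] at this
  have hP1deg : ∀ l : ℕ, n - m ≤ l → P1.degree < (l : WithBot ℕ) := by
    intro l hl
    by_cases hkm : k < m
    · have hz : P1 = 0 := by
        rw [hP1, Polynomial.divByMonic_eq_zero_iff hVmonic, degree_X_pow,
          degree_eq_natDegree hVmonic.ne_zero, hVdeg]
        exact_mod_cast hkm
      rw [hz, degree_zero]
      exact WithBot.bot_lt_coe l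
    · push_neg at hkm
      have hnd : P1.natDegree = k - m := by
        rw [hP1, Polynomial.natDegree_divByMonic _ hVmonic, natDegree_X_pow, hVdeg]
      calc P1.degree ≤ (P1.natDegree : WithBot ℕ) := degree_le_natDegree
        _ < (l : WithBot ℕ) := by
            rw [hnd]
            exact_mod_cast (by omega : k - m < l)
  -- partial fraction coefficients
  set c : Fin m → ℝ := fun j => R1.eval (ε j) / ∏ l ∈ Finset.univ.erase j, (ε l - ε j) with hcdef
  have hprodne : ∀ j : Fin m, (∏ l ∈ Finset.univ.erase j, (ε l - ε j)) ≠ 0 := by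
    intro j
    apply Finset.prod_ne_zero_iff.mpr
    intro l hl
    have hlj : l ≠ j := Finset.ne_of_mem_erase hl
    exact sub_ne_zero.mpr fun hc => hlj (hε hc)
  have hRid : R1 = ∑ j : Fin m, C (c j) * ∏ l ∈ Finset.univ.erase j, (C (ε l) - X) := by
    have hcard : (Finset.univ.image ε).card = m := by
      rw [Finset.card_image_of_injective _ hε, Finset.card_univ, Fintype.card_fin]
    apply Polynomial.eq_of_degrees_lt_of_eval_finset_eq (Finset.univ.image ε)
    · rw [hcard]; exact hR1deg
    · rw [hcard]
      refine lt_of_le_of_lt (Polynomial.degree_sum_le _ _) ?_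
      refine (Finset.sup_lt_iff (by exact_mod_cast WithBot.bot_lt_coe m : (⊥ : WithBot ℕ) < (m : WithBot ℕ))).mpr ?_
      intro j _
      have hm1 : (C (c j) * ∏ l ∈ Finset.univ.erase j, (C (ε l) - X)).natDegree < m := by
        have h1 : (C (c j) * ∏ l ∈ Finset.univ.erase j, (C (ε l) - X)).natDegree
            ≤ (∏ l ∈ Finset.univ.erase j, (C (ε l) - X)).natDegree := by
          refine le_trans (natDegree_mul_le) ?_
          simp
        have h2 : (∏ l ∈ Finset.univ.erase j, (C (ε l) - X)).natDegree
            ≤ ∑ l ∈ Finset.univ.erase j, (C (ε l) - X).natDegree :=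
          Polynomial.natDegree_prod_le _ _
        have h3 : ∀ l : Fin m, (C (ε l) - X).natDegree = 1 := by
          intro l
          rw [show C (ε l) - X = -(X - C (ε l)) by ring, natDegree_neg, natDegree_X_sub_C]
        have h4 : ∑ l ∈ Finset.univ.erase j, (C (ε l) - X).natDegree = m - 1 := by
          rw [Finset.sum_congr rfl fun l _ => h3 l, Finset.sum_const, smul_eq_mul, mul_one,
            Finset.card_erase_of_mem (Finset.mem_univ j), Finset.card_univ, Fintype.card_fin]
        have hm0 : 0 < m := j.pos
        omega
      calc (C (c j) * ∏ l ∈ Finset.univ.erase j, (C (ε l) - X)).degree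
          ≤ ((C (c j) * ∏ l ∈ Finset.univ.erase j, (C (ε l) - X)).natDegree : WithBot ℕ) :=
            degree_le_natDegree
        _ < (m : WithBot ℕ) := by exact_mod_cast hm1
    · intro x hx
      obtain ⟨i, -, rfl⟩ := Finset.mem_image.mp hx
      rw [eval_finset_sum, Finset.sum_eq_single i]
      · rw [eval_mul, eval_prod]
        simp only [eval_sub, eval_C, eval_X]
        rw [hcdef]
        rw [div_mul_cancel₀ _ (hprodne i)]
      · intro j _ hji
        rw [eval_mul, eval_prod]
        apply mul_eq_zero_of_right
        apply Finset.prod_eq_zero (Finset.mem_erase.mpr ⟨hji.symm, Finset.mem_univ i⟩)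
        simp
      · intro hi; exact absurd (Finset.mem_univ i) hi
  -- pointwise identity on the support
  have hkey : ∀ t ∈ Set.Icc (-Q) Q,
      (((w t)⁻¹ : ℝ) : ℂ) * (((t : ℂ)) ^ k * q t)
      = ((-1 : ℂ) ^ m * ((P1.eval t : ℝ) : ℂ)) * q t
        + ∑ j : Fin m, (-(c j) : ℂ) * (q t / ((t : ℂ) - (ε j : ℂ))) := by
    intro t ht
    have hne : ∀ j : Fin m, ε j - t ≠ 0 := by
      intro j
      have h1 := hεQ j; have h2 := ht.2
      intro hcon; nlinarith [hcon]
    have hwne : w t ≠ 0 := (hwpos t ht).ne'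
    have hVt : V.eval t = (-1 : ℝ) ^ m * w t := by
      rw [hV, eval_prod]
      simp only [eval_sub, eval_X, eval_C]
      calc ∏ j : Fin m, (t - ε j) = ∏ j : Fin m, (-1) * (ε j - t) := by
            refine Finset.prod_congr rfl fun j _ => by ring
        _ = (-1 : ℝ) ^ m * w t := by
            rw [Finset.prod_mul_distrib, Finset.prod_const, hw, Finset.card_univ,
              Fintype.card_fin]
    have hRt : R1.eval t = ∑ j : Fin m, c j * ∏ l ∈ Finset.univ.erase j, (ε l - t) := by
      conv_lhs => rw [hRid]
      rw [eval_finset_sum]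
      refine Finset.sum_congr rfl fun j _ => ?_
      rw [eval_mul, eval_prod]
      simp
    have hreal : (w t)⁻¹ * t ^ k
        = (-1 : ℝ) ^ m * P1.eval t + ∑ j : Fin m, c j * (ε j - t)⁻¹ := by
      rw [hXk t, hRt, hVt, mul_add, add_comm]
      congr 1
      · field_simp
      · rw [Finset.mul_sum]
        refine Finset.sum_congr rfl fun j _ => ?_
        have hsplit : w t = (ε j - t) * ∏ l ∈ Finset.univ.erase j, (ε l - t) :=
          (Finset.mul_prod_erase Finset.univ _ (Finset.mem_univ j)).symm
        have h2 : (∏ l ∈ Finset.univ.erase j, (ε l - t)) ≠ 0 :=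
          Finset.prod_ne_zero_iff.mpr fun l _ => hne l
        rw [hsplit, mul_inv,
          show ((ε j - t)⁻¹ * (∏ l ∈ Finset.univ.erase j, (ε l - t))⁻¹) *
              (c j * ∏ l ∈ Finset.univ.erase j, (ε l - t))
            = (c j * (ε j - t)⁻¹) * ((∏ l ∈ Finset.univ.erase j, (ε l - t))⁻¹ *
              ∏ l ∈ Finset.univ.erase j, (ε l - t)) by ring,
          inv_mul_cancel₀ h2, mul_one]
    calc (((w t)⁻¹ : ℝ) : ℂ) * (((t : ℂ)) ^ k * q t)
        = (((w t)⁻¹ * t ^ k : ℝ) : ℂ) * q t := by push_cast; ring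
      _ = ((-1 : ℂ) ^ m * ((P1.eval t : ℝ) : ℂ)) * q t
          + ∑ j : Fin m, (-(c j) : ℂ) * (q t / ((t : ℂ) - (ε j : ℂ))) := by
          rw [hreal]
          push_cast
          rw [add_mul, Finset.sum_mul]
          congr 1
          refine Finset.sum_congr rfl fun j _ => ?_
          rw [div_eq_mul_inv, show ((ε j : ℂ) - (t : ℂ)) = -((t : ℂ) - (ε j : ℂ)) by ring,
            inv_neg]
          ring
  -- integrability
  have hAint : Integrable (fun t => ((-1 : ℂ) ^ m * ((P1.eval t : ℝ) : ℂ)) * q t) α := by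
    apply uv_integrable α Q hQ
    · exact ((continuous_const.mul
        (Complex.continuous_ofReal.comp P1.continuous_aeval)).mul hqc).aestronglyMeasurable
    · exact ((continuous_const.mul
        (Complex.continuous_ofReal.comp P1.continuous_aeval)).mul hqc).continuousOn
  have hBint : ∀ j : Fin m,
      Integrable (fun t => (-(c j) : ℂ) * (q t / ((t : ℂ) - (ε j : ℂ)))) α := fun j =>
    (uv_int_div α Q hQ hqc (ε j) (hεQ j)).const_mul _
  -- the withDensity integral
  have hα'int : ∫ t, ((t : ℂ)) ^ k * q t ∂α'
      = ∫ t, (Real.toNNReal ((w t)⁻¹) : ℝ≥0) • (((t : ℂ)) ^ k * q t) ∂α := by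
    rw [hα']
    exact integral_withDensity_eq_integral_smul
      (hwcont.measurable.inv.real_toNNReal) _
  rw [hα'int]
  have haeq : (fun t => (Real.toNNReal ((w t)⁻¹) : ℝ≥0) • (((t : ℂ)) ^ k * q t))
      =ᵐ[α] (fun t => ((-1 : ℂ) ^ m * ((P1.eval t : ℝ) : ℂ)) * q t
        + ∑ j : Fin m, (-(c j) : ℂ) * (q t / ((t : ℂ) - (ε j : ℂ)))) := by
    filter_upwards [uv_ae α Q hQ] with t ht
    rw [NNReal.smul_def, Real.coe_toNNReal _ (inv_nonneg.mpr (hwpos t ht).le),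
      Complex.real_smul]
    exact hkey t ht
  rw [integral_congr_ae haeq,
    integral_add hAint (integrable_finset_sum _ fun j _ => hBint j),
    integral_finset_sum _ fun j _ => hBint j]
  have hB0 : ∀ j : Fin m, ∫ t, (-(c j) : ℂ) * (q t / ((t : ℂ) - (ε j : ℂ))) ∂α = 0 := by
    intro j
    rw [integral_const_mul, part1 j, mul_zero]
  have hA0 : ∫ t, ((-1 : ℂ) ^ m * ((P1.eval t : ℝ) : ℂ)) * q t ∂α = 0 := by
    have hfun2 : (fun t => ((-1 : ℂ) ^ m * ((P1.eval t : ℝ) : ℂ)) * q t)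
        = fun t => ∑ j : Fin (m + 1), ((-1 : ℂ) ^ m * ((-1 : ℂ) ^ (m + (j : ℕ)) * D j)) *
            ((P1.eval t * (π (n - m + (j : ℕ))).eval t : ℝ) : ℂ) := by
      funext t
      rw [hqexp t, Finset.mul_sum]
      refine Finset.sum_congr rfl fun j _ => ?_
      push_cast
      ring
    have hint2 : ∀ j : Fin (m + 1), Integrable (fun t =>
        ((-1 : ℂ) ^ m * ((-1 : ℂ) ^ (m + (j : ℕ)) * D j)) *
          ((P1.eval t * (π (n - m + (j : ℕ))).eval t : ℝ) : ℂ)) α := by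
      intro j
      exact ((uv_int_polymul α Q hQ P1 (π (n - m + (j : ℕ)))).ofReal
        (𝕜 := ℂ)).const_mul _
    rw [hfun2, integral_finset_sum _ (fun j _ => hint2 j)]
    apply Finset.sum_eq_zero
    intro j _
    have hreal0 : ∫ t, P1.eval t * (π (n - m + (j : ℕ))).eval t ∂α = 0 :=
      uv_orth_lowdeg α Q hQ π hmonic hdeg horth P1 (n - m + (j : ℕ))
        (hP1deg _ (Nat.le_add_right _ _))
    have hcast : ∫ t, ((P1.eval t * (π (n - m + (j : ℕ))).eval t : ℝ) : ℂ) ∂α = 0 := by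
      calc ∫ t, ((P1.eval t * (π (n - m + (j : ℕ))).eval t : ℝ) : ℂ) ∂α
          = ((∫ t, P1.eval t * (π (n - m + (j : ℕ))).eval t ∂α : ℝ) : ℂ) := integral_ofReal
        _ = 0 := by rw [hreal0]; simp
    rw [integral_const_mul, hcast, mul_zero]
  rw [hA0, Finset.sum_congr rfl fun j _ => hB0 j, Finset.sum_const, smul_zero, add_zero]
end

section
/- Average of a single inverse characteristic polynomial: ⟨∏_{i=1}^{N}(ε − xᵢ)^{−1}⟩ with respect to Δ(x)²dα(x)/Z_N equals γ_{N−1} h_{N−1}(ε), where γ_{N−1} = −2πi/c_{N−1}² and h_{N−1}(ε) = (1/2πi)∫ π_{N−1}(t)/(t−ε) dα(t). -/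
open MeasureTheory Polynomial Finset

/-- The Vandermonde product `∏_{i>j} (x i - x j)`. -/
noncomputable def Vand {n : ℕ} (x : Fin n → ℝ) : ℝ :=
  ∏ i : Fin n, ∏ j ∈ Finset.Iio i, (x i - x j)

section Helpers

variable {α : Measure ℝ} [IsFiniteMeasure α] {Q : ℝ}

lemma ae_mem_Icc (hQ : α (Set.Icc (-Q) Q)ᶜ = 0) : ∀ᵐ t ∂α, t ∈ Set.Icc (-Q) Q :=
  Filter.eventually_of_mem (by rwa [MeasureTheory.mem_ae_iff]) (fun _ h => h)

lemma integrable_of_bdd (hQ : α (Set.Icc (-Q) Q)ᶜ = 0) {h : ℝ → ℝ}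
    (hm : AEStronglyMeasurable h α) {C : ℝ} (hC : ∀ t ∈ Set.Icc (-Q) Q, |h t| ≤ C) :
    Integrable h α := by
  refine (integrable_const C).mono' hm ?_
  filter_upwards [ae_mem_Icc hQ] with t ht
  simpa using hC t ht

lemma exists_poly_bound (Q : ℝ) (p : ℝ[X]) : ∃ C, ∀ t ∈ Set.Icc (-Q) Q, |p.eval t| ≤ C := by
  obtain ⟨C, hC⟩ := isCompact_Icc.exists_bound_of_continuousOn
    (f := fun t => p.eval t) (p.continuous.continuousOn)
  exact ⟨C, fun t ht => by simpa using hC t ht⟩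

lemma integrable_poly (hQ : α (Set.Icc (-Q) Q)ᶜ = 0) (p : ℝ[X]) :
    Integrable (fun t => p.eval t) α := by
  obtain ⟨C, hC⟩ := exists_poly_bound Q p
  exact integrable_of_bdd hQ p.continuous.aestronglyMeasurable hC

lemma integrable_poly_inv (hQ : α (Set.Icc (-Q) Q)ᶜ = 0) {ε : ℝ} (hεQ : Q < ε) (p : ℝ[X]) :
    Integrable (fun t => p.eval t * (ε - t)⁻¹) α := by
  obtain ⟨C, hC⟩ := exists_poly_bound Q p
  have hm : AEStronglyMeasurable (fun t => p.eval t * (ε - t)⁻¹) α := by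
    exact (p.continuous.measurable.mul
      ((measurable_const.sub measurable_id).inv)).aestronglyMeasurable
  refine integrable_of_bdd hQ hm (C := |C| * (ε - Q)⁻¹) ?_
  intro t ht
  have h1 : 0 < ε - Q := by linarith
  have h2 : 0 < ε - t := by
    have := ht.2; linarith
  have h3 : (ε - t)⁻¹ ≤ (ε - Q)⁻¹ := by
    apply inv_anti₀ h1; linarith [ht.2]
  rw [abs_mul]
  have h4 : |(ε - t)⁻¹| = (ε - t)⁻¹ := abs_of_pos (by positivity)
  rw [h4]
  apply mul_le_mul ((hC t ht).trans (le_abs_self C)) h3 (le_of_lt (by positivity)) (abs_nonneg C)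

end Helpers

lemma det_expand {N : ℕ} (h : Fin N → ℝ → ℝ) (x : Fin N → ℝ) :
    Matrix.det (Matrix.of fun i j => h j (x i)) =
      ∑ σ : Equiv.Perm (Fin N), ((Equiv.Perm.sign σ : ℤ) : ℝ) * ∏ i, h (σ i) (x i) := by
  rw [Matrix.det_apply]
  rw [← Equiv.sum_comp (Equiv.inv (Equiv.Perm (Fin N)))]
  refine Finset.sum_congr rfl fun σ _ => ?_
  have hp : ∏ i, (Matrix.of fun i j => h j (x i)) (σ⁻¹ i) i = ∏ i, h (σ i) (x i) := by
    rw [← Equiv.prod_comp σ (fun i => (Matrix.of fun i j => h j (x i)) (σ⁻¹ i) i)]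
    exact Finset.prod_congr rfl fun i _ => by simp
  simp only [Equiv.inv_apply, Equiv.Perm.sign_inv, hp, Units.smul_def, zsmul_eq_mul]

lemma andreief {N : ℕ} (μ : Measure ℝ) [IsFiniteMeasure μ] (f g : Fin N → ℝ → ℝ)
    (h : ∀ j k, Integrable (fun t => f j t * g k t) μ) :
    ∫ x : Fin N → ℝ, (Matrix.det (Matrix.of fun i j => f j (x i))) *
      (Matrix.det (Matrix.of fun i j => g j (x i))) ∂(Measure.pi fun _ => μ)
      = (Nat.factorial N : ℝ) * Matrix.det (Matrix.of fun j k => ∫ t, f j t * g k t ∂μ) := by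
  letI : MeasureSpace ℝ := ⟨μ⟩
  have hvol : (Measure.pi fun _ : Fin N => μ) = (volume : Measure (Fin N → ℝ)) := rfl
  rw [hvol]
  have hpt : ∀ x : Fin N → ℝ,
      (Matrix.det (Matrix.of fun i j => f j (x i))) *
        (Matrix.det (Matrix.of fun i j => g j (x i)))
      = ∑ σ : Equiv.Perm (Fin N), ∑ τ : Equiv.Perm (Fin N),
          (((Equiv.Perm.sign σ : ℤ) : ℝ) * ((Equiv.Perm.sign τ : ℤ) : ℝ)) *
            ∏ i, (f (σ i) (x i) * g (τ i) (x i)) := by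
    intro x
    rw [det_expand, det_expand, Finset.sum_mul_sum]
    refine Finset.sum_congr rfl fun σ _ => Finset.sum_congr rfl fun τ _ => ?_
    rw [Finset.prod_mul_distrib]; ring
  simp_rw [hpt]
  have hint : ∀ σ τ : Equiv.Perm (Fin N),
      Integrable (fun x : Fin N → ℝ =>
        (((Equiv.Perm.sign σ : ℤ) : ℝ) * ((Equiv.Perm.sign τ : ℤ) : ℝ)) *
          ∏ i, (f (σ i) (x i) * g (τ i) (x i))) volume := by
    intro σ τ
    exact (Integrable.fintype_prod (f := fun i t => f (σ i) t * g (τ i) t)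
      (fun i => h (σ i) (τ i))).const_mul _
  rw [integral_finset_sum _ (fun σ _ => integrable_finset_sum _ (fun τ _ => hint σ τ))]
  have hswap : ∀ σ, ∫ x : Fin N → ℝ, (∑ τ : Equiv.Perm (Fin N),
      (((Equiv.Perm.sign σ : ℤ) : ℝ) * ((Equiv.Perm.sign τ : ℤ) : ℝ)) *
        ∏ i, (f (σ i) (x i) * g (τ i) (x i))) =
      ∑ τ : Equiv.Perm (Fin N),
      (((Equiv.Perm.sign σ : ℤ) : ℝ) * ((Equiv.Perm.sign τ : ℤ) : ℝ)) *
        ∏ i, ∫ t, f (σ i) t * g (τ i) t ∂μ := by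
    intro σ
    rw [integral_finset_sum _ (fun τ _ => hint σ τ)]
    refine Finset.sum_congr rfl fun τ _ => ?_
    rw [MeasureTheory.integral_const_mul]
    congr 1
    exact MeasureTheory.integral_fintype_prod_eq_prod (ι := Fin N)
      (fun i t => f (σ i) t * g (τ i) t)
  simp_rw [hswap]
  have key : ∀ σ : Equiv.Perm (Fin N),
      (∑ τ : Equiv.Perm (Fin N),
        (((Equiv.Perm.sign σ : ℤ) : ℝ) * ((Equiv.Perm.sign τ : ℤ) : ℝ)) *
          ∏ i, ∫ t, f (σ i) t * g (τ i) t ∂μ)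
      = (Matrix.of fun j k => ∫ t, f j t * g k t ∂μ).det := by
    intro σ
    set B : Matrix (Fin N) (Fin N) ℝ := Matrix.of fun j k => ∫ t, f j t * g k t ∂μ with hB
    have hBapp : ∀ j k, (∫ t, f j t * g k t ∂μ) = B j k := fun j k => rfl
    simp_rw [hBapp]
    rw [← Fintype.sum_bijective (fun ρ : Equiv.Perm (Fin N) => ρ * σ)
      (Group.mulRight_bijective σ) _ _ (fun ρ => rfl)]
    rw [← Matrix.det_transpose B, Matrix.det_apply]
    refine Finset.sum_congr rfl fun ρ _ => ?_
    have hprod : ∏ i, B (σ i) ((ρ * σ) i) = ∏ i, B i (ρ i) := by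
      simpa [Equiv.Perm.mul_apply] using Equiv.prod_comp σ (fun i => B i (ρ i))
    rw [hprod]
    simp only [Matrix.transpose_apply, Units.smul_def, zsmul_eq_mul, map_mul, Units.val_mul]
    push_cast
    rcases Int.units_eq_one_or (Equiv.Perm.sign σ) with hs | hs <;>
      rw [hs] <;> push_cast <;> ring
  simp_rw [key]
  rw [Finset.sum_const, Finset.card_univ, Fintype.card_perm, Fintype.card_fin, nsmul_eq_mul]

lemma orth_lower {α : Measure ℝ} [IsFiniteMeasure α] {Q : ℝ} (hQ : α (Set.Icc (-Q) Q)ᶜ = 0)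
    (π : ℕ → Polynomial ℝ)
    (hmonic : ∀ j, (π j).Monic) (hdeg : ∀ j, (π j).natDegree = j)
    (horth : ∀ j k, j ≠ k → ∫ t, (π j).eval t * (π k).eval t ∂α = 0)
    (m : ℕ) : ∀ (n : ℕ) (p : ℝ[X]), p.natDegree < n → n ≤ m →
      ∫ t, (π m).eval t * p.eval t ∂α = 0 := by
  intro n
  induction n with
  | zero => intro p hp; omega
  | succ n ih =>
    intro p hp hnm
    by_cases hp0 : p = 0
    · simp [hp0]
    set c := p.coeff n with hc
    set p' := p - C c * π n with hp'
    have hsplit : ∀ t, (π m).eval t * p.eval t =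
        (π m).eval t * p'.eval t + c * ((π m).eval t * (π n).eval t) := by
      intro t; simp only [hp', eval_sub, eval_mul, eval_C]; ring
    have hint1 : Integrable (fun t => (π m).eval t * p'.eval t) α := by
      simpa [Polynomial.eval_mul] using integrable_poly hQ (π m * p')
    have hint2 : Integrable (fun t => c * ((π m).eval t * (π n).eval t)) α := by
      exact (by simpa [Polynomial.eval_mul] using integrable_poly hQ (π m * π n)
        : Integrable (fun t => (π m).eval t * (π n).eval t) α).const_mul c
    calc ∫ t, (π m).eval t * p.eval t ∂α
        = ∫ t, ((π m).eval t * p'.eval t + c * ((π m).eval t * (π n).eval t)) ∂α := by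
          exact integral_congr_ae (Filter.Eventually.of_forall (fun t => hsplit t))
      _ = (∫ t, (π m).eval t * p'.eval t ∂α) +
            ∫ t, c * ((π m).eval t * (π n).eval t) ∂α := integral_add hint1 hint2
      _ = 0 := by
          rw [MeasureTheory.integral_const_mul, horth m n (by omega), mul_zero, add_zero]
          by_cases hz : p' = 0
          · simp [hz]
          · refine ih p' ?_ (by omega)
            rw [natDegree_lt_iff_degree_lt hz]
            rw [Polynomial.degree_lt_iff_coeff_zero]
            intro k hk
            have hk' : n ≤ k := by exact_mod_cast hk
            have hπc : (π n).coeff n = 1 := by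
              have := (hmonic n).coeff_natDegree
              rwa [hdeg n] at this
            rcases eq_or_lt_of_le hk' with h | h
            · subst h
              simp [hp', coeff_sub, coeff_C_mul, hπc, hc]
            · have h1 : p.coeff k = 0 :=
                coeff_eq_zero_of_natDegree_lt (by omega)
              have h2 : (π n).coeff k = 0 :=
                coeff_eq_zero_of_natDegree_lt (by rw [hdeg n]; omega)
              simp [hp', coeff_sub, coeff_C_mul, h1, h2]

lemma vand_eq_det {N : ℕ} (π : ℕ → Polynomial ℝ)
    (hmonic : ∀ j, (π j).Monic) (hdeg : ∀ j, (π j).natDegree = j) (x : Fin N → ℝ) :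
    Vand x = (Matrix.of fun i j : Fin N => (π j.val).eval (x i)).det := by
  have h1 : Vand x = (Matrix.vandermonde x).det := by
    rw [Matrix.det_vandermonde, Vand]
    rw [Finset.prod_comm' (t' := Finset.univ) (s' := fun j => Finset.Ioi j)
      (by intro i j; simp [Finset.mem_Iio, Finset.mem_Ioi])]
  rw [h1, Matrix.det_eval_matrixOfPolynomials_eq_det_vandermonde x
    (fun j => π j.val) (fun j => hdeg j.val) (fun j => hmonic j.val)]

lemma Z_value {M : ℕ} (α : Measure ℝ) [IsFiniteMeasure α] {Q : ℝ}
    (hQ : α (Set.Icc (-Q) Q)ᶜ = 0) (π : ℕ → Polynomial ℝ)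
    (hmonic : ∀ j, (π j).Monic) (hdeg : ∀ j, (π j).natDegree = j)
    (horth : ∀ j k, j ≠ k → ∫ t, (π j).eval t * (π k).eval t ∂α = 0) :
    ∫ x : Fin (M+1) → ℝ, (Vand x) ^ 2 ∂(Measure.pi fun _ => α)
      = (Nat.factorial (M+1) : ℝ) *
        ∏ j : Fin (M+1), ∫ t, (π j.val).eval t * (π j.val).eval t ∂α := by
  have hpt : ∀ x : Fin (M+1) → ℝ, (Vand x)^2 =
      (Matrix.of fun i j : Fin (M+1) => (π j.val).eval (x i)).det *
      (Matrix.of fun i j : Fin (M+1) => (π j.val).eval (x i)).det := by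
    intro x; rw [← vand_eq_det π hmonic hdeg, sq]
  simp_rw [hpt]
  rw [andreief α (fun j t => (π j.val).eval t) (fun j t => (π j.val).eval t) (fun j k => by
    simpa [Polynomial.eval_mul] using integrable_poly hQ (π j.val * π k.val))]
  congr 1
  have : (Matrix.of fun j k : Fin (M+1) => ∫ t, (π j.val).eval t * (π k.val).eval t ∂α)
      = Matrix.diagonal (fun j : Fin (M+1) => ∫ t, (π j.val).eval t * (π j.val).eval t ∂α) := by
    ext j k
    by_cases hjk : j = k
    · subst hjk; simp [Matrix.diagonal]
    · rw [Matrix.diagonal_apply_ne _ hjk]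
      exact horth j.val k.val (fun h => hjk (Fin.val_injective h)) ▸ rfl
  rw [this, Matrix.det_diagonal]

lemma J_value {M : ℕ} (α : Measure ℝ) [IsFiniteMeasure α] {Q : ℝ}
    (hQ : α (Set.Icc (-Q) Q)ᶜ = 0) (π : ℕ → Polynomial ℝ)
    (hmonic : ∀ j, (π j).Monic) (hdeg : ∀ j, (π j).natDegree = j)
    (horth : ∀ j k, j ≠ k → ∫ t, (π j).eval t * (π k).eval t ∂α = 0)
    {ε : ℝ} (hεQ : Q < ε) :
    ∫ x : Fin (M+1) → ℝ, (∏ i, (ε - x i))⁻¹ * (Vand x) ^ 2 ∂(Measure.pi fun _ => α)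
      = (Nat.factorial (M+1) : ℝ) *
        ((∏ k : Fin M, ∫ t, (π k.val).eval t * (π k.val).eval t ∂α) *
          ∫ t, (π M).eval t * (ε - t)⁻¹ ∂α) := by
  classical
  have hπ0 : π 0 = 1 := ((hmonic 0).natDegree_eq_zero).mp (hdeg 0)
  -- the quotient polynomials
  set q : ℕ → ℝ[X] := fun j => (π j - C ((π j).eval ε)) /ₘ (X - C ε) with hqdef
  have hqmul : ∀ j, (X - C ε) * q j = π j - C ((π j).eval ε) := by
    intro j
    have h := modByMonic_add_div (π j - C ((π j).eval ε)) (X - C ε)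
    rwa [(modByMonic_eq_zero_iff_dvd (monic_X_sub_C ε)).mpr X_sub_C_dvd_sub_C_eval,
      zero_add] at h
  have hq0 : q 0 = 0 := by
    simp [hqdef, hπ0, zero_divByMonic]
  have hqdeg : ∀ j, (q j).natDegree = j - 1 := by
    intro j
    simp [hqdef, natDegree_divByMonic _ (monic_X_sub_C ε), natDegree_sub_C, hdeg,
      natDegree_X_sub_C]
  have hqlead : ∀ j, 1 ≤ j → (q j).coeff (j-1) = 1 := by
    intro j hj
    have hlc : (π j - C ((π j).eval ε)).leadingCoeff = 1 := by
      rw [leadingCoeff, natDegree_sub_C, hdeg]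
      have : (C ((π j).eval ε)).coeff j = 0 := by
        rw [coeff_C, if_neg (by omega)]
      rw [coeff_sub, this, sub_zero]
      have := (hmonic j).coeff_natDegree
      rwa [hdeg] at this
    have h2 : (X - C ε).leadingCoeff * (q j).leadingCoeff = 1 := by
      rw [← leadingCoeff_mul, hqmul j, hlc]
    rw [(monic_X_sub_C ε).leadingCoeff, one_mul] at h2
    rw [← hqdeg j] at *
    rwa [← leadingCoeff]
  have hqeval : ∀ j t, (π j).eval t = (π j).eval ε + (t - ε) * (q j).eval t := by
    intro j t
    have h := congrArg (eval t) (hqmul j)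
    simp only [eval_mul, eval_sub, eval_X, eval_C] at h
    linarith
  -- the auxiliary function family
  set g' : Fin (M+1) → ℝ → ℝ :=
    fun k t => if k = 0 then (ε - t)⁻¹ else t ^ ((k : ℕ) - 1) with hg'
  -- the change of basis matrix
  set T : Matrix (Fin (M+1)) (Fin (M+1)) ℝ :=
    Matrix.of fun k j => if k = 0 then (π j.val).eval ε else -((q j.val).coeff ((k:ℕ)-1))
    with hT
  have hTtri : T.BlockTriangular id := by
    intro j k hk
    simp only [id] at hk
    have hj0 : j ≠ 0 := by
      intro h; subst h; exact absurd hk (by simp)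
    simp only [hT, Matrix.of_apply, if_neg hj0]
    rcases Nat.eq_zero_or_pos k.val with hk0 | hk0
    · rw [show (q k.val) = 0 by rw [show k.val = 0 from hk0]; exact hq0]
      simp
    · rw [coeff_eq_zero_of_natDegree_lt, neg_zero]
      rw [hqdeg]
      have : (k : ℕ) < (j : ℕ) := hk
      have : 1 ≤ (j : ℕ) := by omega
      omega
  have hdetT : T.det = (-1 : ℝ)^M := by
    rw [Matrix.det_of_upperTriangular hTtri]
    rw [Fin.prod_univ_succ]
    have h0 : T 0 0 = 1 := by simp [hT, hπ0]
    have hs : ∀ k : Fin M, T k.succ k.succ = -1 := by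
      intro k
      have : (k.succ : Fin (M+1)) ≠ 0 := Fin.succ_ne_zero k
      simp only [hT, Matrix.of_apply, if_neg this]
      rw [hqlead k.succ.val (by simp [Fin.val_succ])]
    simp only [h0, hs, one_mul, Finset.prod_const, Finset.card_univ, Fintype.card_fin]
  -- a.e. all coordinates differ from ε
  have hsingle : α {ε} = 0 := by
    apply measure_mono_null _ hQ
    intro y hy
    simp only [Set.mem_singleton_iff] at hy
    subst hy
    simp only [Set.mem_compl_iff, Set.mem_Icc, not_and_or]
    right; linarith
  have hae : ∀ᵐ x ∂(Measure.pi fun _ : Fin (M+1) => α), ∀ i, x i ≠ ε := by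
    rw [MeasureTheory.ae_all_iff]
    intro i
    rw [MeasureTheory.ae_iff]
    have hset : {x : Fin (M+1) → ℝ | ¬ x i ≠ ε} =
        Set.univ.pi (Function.update (fun _ : Fin (M+1) => (Set.univ : Set ℝ)) i {ε}) := by
      ext x
      simp only [Set.mem_setOf_eq, not_not, Set.mem_pi, Set.mem_univ, forall_true_left]
      constructor
      · intro h j
        by_cases hj : j = i
        · subst hj; simp [Function.update, h]
        · simp [Function.update, hj]
      · intro h
        have := h i
        simpa [Function.update] using this
    rw [hset, Measure.pi_pi]
    apply Finset.prod_eq_zero (Finset.mem_univ i)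
    simpa [Function.update] using hsingle
  -- pointwise identity
  have hptwise : ∀ x : Fin (M+1) → ℝ, (∀ i, x i ≠ ε) →
      (∏ i, (ε - x i))⁻¹ * (Vand x)^2
        = (-1:ℝ)^M * ((Matrix.of fun i j : Fin (M+1) => (π j.val).eval (x i)).det *
            (Matrix.of fun i k : Fin (M+1) => g' k (x i)).det) := by
    intro x hx
    have hGmul : (Matrix.of fun i j : Fin (M+1) => (ε - x i)⁻¹ * (π j.val).eval (x i))
        = (Matrix.of fun i k : Fin (M+1) => g' k (x i)) * T := by
      ext i j
      rw [Matrix.mul_apply, Fin.sum_univ_succ]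
      have h0 : (Matrix.of fun i k : Fin (M+1) => g' k (x i)) i 0 * T 0 j
          = (ε - x i)⁻¹ * (π j.val).eval ε := by
        simp [hg', hT]
      have hterm : ∀ k : Fin M,
          (Matrix.of fun i k : Fin (M+1) => g' k (x i)) i k.succ * T k.succ j
            = -((q j.val).coeff k.val * (x i) ^ (k.val)) := by
        intro k
        have hne : (k.succ : Fin (M+1)) ≠ 0 := Fin.succ_ne_zero k
        simp only [hg', hT, Matrix.of_apply, if_neg hne, Fin.val_succ, Nat.add_sub_cancel]
        ring
      have hsum : ∑ k : Fin M,
          (Matrix.of fun i k : Fin (M+1) => g' k (x i)) i k.succ * T k.succ j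
            = -((q j.val).eval (x i)) := by
        rw [Finset.sum_congr rfl (fun k _ => hterm k), Finset.sum_neg_distrib]
        congr 1
        have hrange := Fin.sum_univ_eq_sum_range
          (fun m => (q j.val).coeff m * (x i) ^ m) M
        rcases Nat.eq_zero_or_pos j.val with hj0 | hj0
        · have : q j.val = 0 := by rw [hj0]; exact hq0
          simp [this]
        · rw [hrange, ← eval_eq_sum_range' (show (q j.val).natDegree < M by
            rw [hqdeg]; have := j.isLt; omega)]
      rw [h0, hsum]
      have hne : ε - x i ≠ 0 := sub_ne_zero.mpr (Ne.symm (hx i))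
      rw [Matrix.of_apply, hqeval j.val (x i)]
      field_simp
      ring
    have hF := vand_eq_det π hmonic hdeg x
    have hdetG : (Matrix.of fun i j : Fin (M+1) => (ε - x i)⁻¹ * (π j.val).eval (x i)).det
        = (∏ i, (ε - x i))⁻¹ *
          (Matrix.of fun i j : Fin (M+1) => (π j.val).eval (x i)).det := by
      have h := Matrix.det_mul_column (fun i : Fin (M+1) => (ε - x i)⁻¹)
        (Matrix.of fun i j : Fin (M+1) => (π j.val).eval (x i))
      rw [Finset.prod_inv_distrib] at h
      simpa using h
    have key : (∏ i, (ε - x i))⁻¹ *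
        (Matrix.of fun i j : Fin (M+1) => (π j.val).eval (x i)).det
        = (-1:ℝ)^M * (Matrix.of fun i k : Fin (M+1) => g' k (x i)).det := by
      rw [← hdetG, hGmul, Matrix.det_mul, hdetT]; ring
    calc (∏ i, (ε - x i))⁻¹ * (Vand x)^2
        = ((∏ i, (ε - x i))⁻¹ *
            (Matrix.of fun i j : Fin (M+1) => (π j.val).eval (x i)).det) *
          (Matrix.of fun i j : Fin (M+1) => (π j.val).eval (x i)).det := by
          rw [hF]; ring
      _ = ((-1:ℝ)^M * (Matrix.of fun i k : Fin (M+1) => g' k (x i)).det) *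
          (Matrix.of fun i j : Fin (M+1) => (π j.val).eval (x i)).det := by rw [key]
      _ = _ := by ring
  -- integrability of the Gram entries
  have hintfg : ∀ j k : Fin (M+1),
      Integrable (fun t => (π j.val).eval t * g' k t) α := by
    intro j k
    by_cases hk : k = 0
    · subst hk
      simpa [hg'] using integrable_poly_inv hQ hεQ (π j.val)
    · simp only [hg', if_neg hk]
      have h := integrable_poly hQ (π j.val * X ^ ((k:ℕ)-1))
      simp only [eval_mul, eval_pow, eval_X] at h
      exact h
  -- the diagonal entries
  have hdiag : ∀ m : ℕ, ∫ t, (π m).eval t * t ^ m ∂α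
      = ∫ t, (π m).eval t * (π m).eval t ∂α := by
    intro m
    have hsplit : (fun t : ℝ => (π m).eval t * t ^ m)
        = fun t => (π m).eval t * (π m).eval t
            + (π m).eval t * ((X:ℝ[X]) ^ m - π m).eval t := by
      funext t; simp only [eval_sub, eval_pow, eval_X]; ring
    have hint1 : Integrable (fun t => (π m).eval t * (π m).eval t) α := by
      simpa [Polynomial.eval_mul] using integrable_poly hQ (π m * π m)
    have hint2 : Integrable (fun t => (π m).eval t * ((X:ℝ[X]) ^ m - π m).eval t) α := by
      simpa [Polynomial.eval_mul] using integrable_poly hQ (π m * ((X:ℝ[X]) ^ m - π m))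
    rw [hsplit, integral_add hint1 hint2]
    have hzero : ∫ t, (π m).eval t * ((X:ℝ[X]) ^ m - π m).eval t ∂α = 0 := by
      by_cases h0 : (X:ℝ[X]) ^ m - π m = 0
      · simp [h0]
      · refine orth_lower hQ π hmonic hdeg horth m m _ ?_ le_rfl
        have hdd : ((X:ℝ[X]) ^ m - π m).degree < ((X:ℝ[X]) ^ m).degree :=
          degree_sub_lt
            (by rw [degree_X_pow, degree_eq_natDegree (hmonic m).ne_zero, hdeg])
            (pow_ne_zero _ X_ne_zero)
            (by rw [(monic_X_pow m).leadingCoeff, (hmonic m).leadingCoeff])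
        rw [natDegree_lt_iff_degree_lt h0]
        rwa [degree_X_pow] at hdd
    rw [hzero, add_zero]
  -- determinant of the Gram matrix
  set B : Matrix (Fin (M+1)) (Fin (M+1)) ℝ :=
    Matrix.of fun j k => ∫ t, (π j.val).eval t * g' k t ∂α with hB
  have hB0 : ∀ j k : Fin (M+1), (k:ℕ) ≠ 0 → (k:ℕ) ≤ (j:ℕ) → B j k = 0 := by
    intro j k hk0 hkj
    have hkne : k ≠ 0 := fun h => hk0 (by rw [h]; rfl)
    show (∫ t, (π j.val).eval t * g' k t ∂α) = 0
    simp only [hg', if_neg hkne]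
    have := orth_lower hQ π hmonic hdeg horth j.val j.val ((X:ℝ[X]) ^ ((k:ℕ)-1))
      (by rw [natDegree_X_pow]; omega) le_rfl
    simpa [eval_pow, eval_X] using this
  have htriB : (B.submatrix id (finRotate (M+1))).BlockTriangular id := by
    intro i j hij
    have hij' : j < i := hij
    show B i ((finRotate (M+1)) j) = 0
    have hjlast : j < Fin.last M := lt_of_lt_of_le hij' (Fin.le_last i)
    have hval : (((finRotate (M+1)) j : Fin (M+1)) : ℕ) = (j:ℕ) + 1 := by
      rw [finRotate_succ_apply]; exact Fin.val_add_one_of_lt hjlast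
    have hlt : (j:ℕ) < (i:ℕ) := hij'
    exact hB0 i _ (by omega) (by omega)
  have hdet1 : (B.submatrix id (finRotate (M+1))).det
      = (∏ k : Fin M, ∫ t, (π k.val).eval t * (π k.val).eval t ∂α) *
        (∫ t, (π M).eval t * (ε - t)⁻¹ ∂α) := by
    rw [Matrix.det_of_upperTriangular htriB, Fin.prod_univ_castSucc]
    congr 1
    · refine Finset.prod_congr rfl fun k _ => ?_
      show B k.castSucc ((finRotate (M+1)) k.castSucc) = _
      have hlt : k.castSucc < Fin.last M := Fin.castSucc_lt_last k
      have hval : (((finRotate (M+1)) k.castSucc : Fin (M+1)) : ℕ) = (k:ℕ) + 1 := by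
        rw [finRotate_succ_apply, Fin.val_add_one_of_lt hlt, Fin.coe_castSucc]
      have hne : ((finRotate (M+1)) k.castSucc : Fin (M+1)) ≠ 0 := by
        intro h; rw [h] at hval; simp at hval
      show (∫ t, (π (k.castSucc : Fin (M+1)).val).eval t *
        g' ((finRotate (M+1)) k.castSucc) t ∂α) = _
      simp only [hg', if_neg hne, hval, Nat.add_sub_cancel, Fin.coe_castSucc]
      exact hdiag k.val
    · show B (Fin.last M) ((finRotate (M+1)) (Fin.last M)) = _
      rw [finRotate_last]
      show (∫ t, (π (Fin.last M).val).eval t * g' 0 t ∂α) = _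
      simp only [hg', if_pos rfl, Fin.val_last]
  have hsign : (((Equiv.Perm.sign (finRotate (M+1)) : ℤ)) : ℝ) = (-1:ℝ)^M := by
    rw [sign_finRotate]; push_cast; ring
  have hperm := Matrix.det_permute' (finRotate (M+1)) B
  have hdetB : B.det = (-1:ℝ)^M *
      ((∏ k : Fin M, ∫ t, (π k.val).eval t * (π k.val).eval t ∂α) *
        (∫ t, (π M).eval t * (ε - t)⁻¹ ∂α)) := by
    rw [← hdet1, hperm, hsign, ← mul_assoc, ← pow_add]
    rw [Even.neg_one_pow ⟨M, rfl⟩, one_mul]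
  -- put everything together
  have hcongr : ∫ x : Fin (M+1) → ℝ, (∏ i, (ε - x i))⁻¹ * (Vand x)^2
        ∂(Measure.pi fun _ => α)
      = ∫ x : Fin (M+1) → ℝ, (-1:ℝ)^M *
          ((Matrix.of fun i j : Fin (M+1) => (π j.val).eval (x i)).det *
            (Matrix.of fun i k : Fin (M+1) => g' k (x i)).det)
        ∂(Measure.pi fun _ => α) :=
    integral_congr_ae (hae.mono fun x hx => hptwise x hx)
  rw [hcongr, MeasureTheory.integral_const_mul]
  rw [andreief α (fun j t => (π j.val).eval t) g' hintfg]
  rw [show (Matrix.of fun j k : Fin (M+1) => ∫ t, (π j.val).eval t * g' k t ∂α) = B from rfl]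
  rw [hdetB]
  have hsq : (-1:ℝ)^M * (-1:ℝ)^M = 1 := by
    rw [← pow_add]; exact Even.neg_one_pow ⟨M, rfl⟩
  calc (-1:ℝ)^M * ((Nat.factorial (M+1) : ℝ) * ((-1:ℝ)^M *
        ((∏ k : Fin M, ∫ t, (π k.val).eval t * (π k.val).eval t ∂α) *
          (∫ t, (π M).eval t * (ε - t)⁻¹ ∂α))))
      = ((-1:ℝ)^M * (-1:ℝ)^M) * ((Nat.factorial (M+1) : ℝ) *
        ((∏ k : Fin M, ∫ t, (π k.val).eval t * (π k.val).eval t ∂α) *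
          (∫ t, (π M).eval t * (ε - t)⁻¹ ∂α))) := by ring
    _ = _ := by rw [hsq, one_mul]


/-- Average of a single inverse characteristic polynomial:
`⟨ ∏_i (ε - x_i)⁻¹ ⟩ = γ_{N-1} h_{N-1}(ε)` where `γ_{N-1} = -2πi/c_{N-1}²`. -/
theorem average_inverse_char_poly (α : Measure ℝ) [IsFiniteMeasure α] (Q : ℝ)
    (hQ : α (Set.Icc (-Q) Q)ᶜ = 0)
    (hposdef : ∀ p : Polynomial ℝ, p ≠ 0 → 0 < ∫ t, (p.eval t) ^ 2 ∂α)
    (π : ℕ → Polynomial ℝ)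
    (hmonic : ∀ j, (π j).Monic) (hdeg : ∀ j, (π j).natDegree = j)
    (horth : ∀ j k, j ≠ k → ∫ t, (π j).eval t * (π k).eval t ∂α = 0)
    (N : ℕ) (hN : 1 ≤ N) (ε : ℝ) (hεQ : Q < ε)
    (c : ℝ) (hc : c ^ 2 = ∫ t, ((π (N - 1)).eval t) ^ 2 ∂α)
    (Z : ℝ)
    (hZ : Z = ∫ x : Fin N → ℝ, (Vand x) ^ 2 ∂(Measure.pi fun _ => α)) :
    Complex.ofReal
        ((1 / Z) * ∫ x : Fin N → ℝ, (∏ i, (ε - x i))⁻¹ * (Vand x) ^ 2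
          ∂(Measure.pi fun _ => α))
      = (-(2 * (Real.pi : ℂ) * Complex.I) / (c : ℂ) ^ 2) *
        ((1 / (2 * (Real.pi : ℂ) * Complex.I)) *
          ∫ t, Complex.ofReal ((π (N - 1)).eval t) / ((t : ℂ) - (ε : ℂ)) ∂α) := by
  obtain ⟨M, rfl⟩ : ∃ M, N = M + 1 := ⟨N - 1, (Nat.succ_pred_eq_of_pos hN).symm⟩
  have hMsub : M + 1 - 1 = M := by omega
  rw [hMsub] at hc
  have hsq2 : ∀ p : ℝ[X], (∫ t, (p.eval t)^2 ∂α) = ∫ t, p.eval t * p.eval t ∂α :=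
    fun p => by simp_rw [pow_two]
  set P : ℝ := ∏ k : Fin M, ∫ t, (π k.val).eval t * (π k.val).eval t ∂α with hP
  set DL : ℝ := ∫ t, (π M).eval t * (π M).eval t ∂α with hDL
  set w : ℝ := ∫ t, (π M).eval t * (ε - t)⁻¹ ∂α with hw
  have hdpos : ∀ m : ℕ, 0 < ∫ t, (π m).eval t * (π m).eval t ∂α := by
    intro m
    rw [← hsq2]
    exact hposdef (π m) (hmonic m).ne_zero
  have hPpos : 0 < P := Finset.prod_pos fun k _ => hdpos k.val
  have hDLpos : 0 < DL := hdpos M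
  have hfac : (0:ℝ) < (Nat.factorial (M+1) : ℝ) := by positivity
  have hZv : Z = (Nat.factorial (M+1) : ℝ) * (P * DL) := by
    rw [hZ, Z_value α hQ π hmonic hdeg horth, Fin.prod_univ_castSucc]
    congr 1
  have hcsq : c ^ 2 = DL := by rw [hc, hDL, hsq2]
  have hJv : (∫ x : Fin (M+1) → ℝ, (∏ i, (ε - x i))⁻¹ * (Vand x) ^ 2
      ∂(Measure.pi fun _ => α)) = (Nat.factorial (M+1) : ℝ) * (P * w) :=
    J_value α hQ π hmonic hdeg horth hεQ
  have hreal : (1 / Z) * (∫ x : Fin (M+1) → ℝ, (∏ i, (ε - x i))⁻¹ * (Vand x) ^ 2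
      ∂(Measure.pi fun _ => α)) = w / c ^ 2 := by
    rw [hJv, hZv, hcsq]
    field_simp
  rw [hreal]
  -- complex side
  have hz : (2 * (Real.pi:ℂ) * Complex.I) ≠ 0 :=
    mul_ne_zero (mul_ne_zero two_ne_zero (by exact_mod_cast Real.pi_ne_zero))
      Complex.I_ne_zero
  have hcne : (c:ℂ) ≠ 0 := by
    have hc0 : c ≠ 0 := by
      intro h
      rw [h] at hcsq
      simp at hcsq
      exact absurd hcsq.symm (ne_of_gt hDLpos)
    exact_mod_cast hc0
  have hI : (∫ t, Complex.ofReal ((π (M+1-1)).eval t) / ((t : ℂ) - (ε : ℂ)) ∂α)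
      = Complex.ofReal (-w) := by
    rw [hMsub]
    have hpt : ∀ t : ℝ, Complex.ofReal ((π M).eval t) / ((t:ℂ) - (ε:ℂ))
        = Complex.ofReal (-((π M).eval t * (ε - t)⁻¹)) := by
      intro t
      rw [show ((t:ℂ) - (ε:ℂ)) = Complex.ofReal (t - ε) by push_cast; ring,
        ← Complex.ofReal_div]
      congr 1
      rw [div_eq_mul_inv, show (t - ε) = -(ε - t) by ring, inv_neg]
      ring
    calc (∫ t, Complex.ofReal ((π M).eval t) / ((t:ℂ) - (ε:ℂ)) ∂α)
        = ∫ t, Complex.ofReal (-((π M).eval t * (ε - t)⁻¹)) ∂α :=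
          integral_congr_ae (Filter.Eventually.of_forall hpt)
      _ = Complex.ofReal (∫ t, -((π M).eval t * (ε - t)⁻¹) ∂α) := integral_ofReal
      _ = Complex.ofReal (-w) := by rw [integral_neg, ← hw]
  rw [hI]
  rw [show ((-w : ℝ) : ℂ) = -(w:ℂ) from Complex.ofReal_neg w]
  rw [Complex.ofReal_div, Complex.ofReal_pow]
  field_simp
end

section
/- Fyodorov–Strahov formula for inverse products: for 1 ≤ M ≤ N, ⟨∏_{j=1}^{M} ∏_{i=1}^{N}(ε_j − xᵢ)^{−1}⟩ with respect to Δ(x)²dα(x)/Z_N equals (−1)^{M(M−1)/2} (∏_{j=N−M}^{N−1} γ_j / Δ(ε)) · det(h_{N−M+j−1}(εᵢ))₁≤i,j≤M. -/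
open MeasureTheory Polynomial Finset Matrix

namespace FS

lemma vand_eq_Ioi {n : ℕ} (y : Fin n → ℝ) :
    ∏ i : Fin n, ∏ j ∈ Finset.Ioi i, (y j - y i) = Vand y := by
  rw [Vand]
  exact Finset.prod_comm' (by simp [and_comm])

lemma vand_eq_det {n : ℕ} (y : Fin n → ℝ) : (Matrix.vandermonde y).det = Vand y := by
  rw [Matrix.det_vandermonde, vand_eq_Ioi]

lemma vand_ne_zero {n : ℕ} {y : Fin n → ℝ} (hy : Function.Injective y) : Vand y ≠ 0 := by
  rw [Vand]
  apply Finset.prod_ne_zero_iff.2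
  intro i _
  apply Finset.prod_ne_zero_iff.2
  intro j hj
  have : j < i := Finset.mem_Iio.1 hj
  exact sub_ne_zero_of_ne (fun hc => absurd (hy hc).symm (ne_of_lt this))

lemma det_eval {n : ℕ} (g : Fin n → Polynomial ℝ) (hg : ∀ c, (g c).natDegree < n)
    (y : Fin n → ℝ) :
    Matrix.det (Matrix.of fun i c => (g c).eval (y i))
      = Vand y * Matrix.det (Matrix.of fun d c : Fin n => (g c).coeff d) := by
  have key : (Matrix.of fun i c => (g c).eval (y i))
      = (Matrix.vandermonde y) * (Matrix.of fun d c : Fin n => (g c).coeff d) := by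
    ext i c
    rw [Matrix.mul_apply]
    simp only [Matrix.of_apply, Matrix.vandermonde]
    rw [Polynomial.eval_eq_sum_range' (hg c), ← Fin.sum_univ_eq_sum_range]
    simp [mul_comm]
  rw [key, Matrix.det_mul, vand_eq_det]

lemma det_pi_eval {n : ℕ} (π : ℕ → Polynomial ℝ) (hmonic : ∀ j, (π j).Monic)
    (hdeg : ∀ j, (π j).natDegree = j) (y : Fin n → ℝ) :
    Matrix.det (Matrix.of fun i k : Fin n => (π (k : ℕ)).eval (y i)) = Vand y := by
  rw [det_eval _ (fun c => by rw [hdeg]; exact c.isLt) y]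
  have h1 : Matrix.det (Matrix.of fun d c : Fin n => (π (c : ℕ)).coeff d) = 1 := by
    rw [Matrix.det_of_upperTriangular]
    · apply Finset.prod_eq_one
      intro k _
      have := (hmonic (k : ℕ)).coeff_natDegree
      rwa [hdeg] at this
    · intro d c hcd
      exact Polynomial.coeff_eq_zero_of_natDegree_lt (by rw [hdeg]; exact_mod_cast hcd)
  rw [h1, mul_one]

lemma prod_erase_eq {M : ℕ} (ε : Fin M → ℝ) :
    ∏ j : Fin M, ∏ j' ∈ Finset.univ.erase j, (ε j' - ε j)
      = (-1 : ℝ) ^ (M * (M - 1) / 2) * Vand ε ^ 2 := by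
  have herase : ∀ j : Fin M, Finset.univ.erase j = Finset.Iio j ∪ Finset.Ioi j := by
    intro j; ext j'
    simp only [Finset.mem_erase, Finset.mem_union, Finset.mem_Iio, Finset.mem_Ioi,
      Finset.mem_univ, and_true]
    constructor
    · exact fun hne => lt_or_gt_of_ne hne
    · rintro (hlt | hgt)
      · exact ne_of_lt hlt
      · exact ne_of_gt hgt
  have hdisj : ∀ j : Fin M, Disjoint (Finset.Iio j) (Finset.Ioi j) := by
    intro j
    exact Finset.disjoint_left.2 (fun a ha ha' => absurd (Finset.mem_Iio.1 ha)
      (not_lt.2 (le_of_lt (Finset.mem_Ioi.1 ha'))))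
  calc ∏ j : Fin M, ∏ j' ∈ Finset.univ.erase j, (ε j' - ε j)
      = ∏ j : Fin M, ((∏ j' ∈ Finset.Iio j, (ε j' - ε j)) * ∏ j' ∈ Finset.Ioi j, (ε j' - ε j)) := by
        apply Finset.prod_congr rfl
        intro j _
        rw [herase j, Finset.prod_union (hdisj j)]
    _ = (∏ j : Fin M, ∏ j' ∈ Finset.Iio j, (ε j' - ε j)) * Vand ε := by
        rw [Finset.prod_mul_distrib, vand_eq_Ioi]
    _ = (-1 : ℝ) ^ (M * (M - 1) / 2) * Vand ε ^ 2 := by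
        have : ∀ j : Fin M, ∏ j' ∈ Finset.Iio j, (ε j' - ε j)
            = (-1 : ℝ) ^ ((j : ℕ)) * ∏ j' ∈ Finset.Iio j, (ε j - ε j') := by
          intro j
          rw [← Fin.card_Iio j, ← Finset.prod_const, ← Finset.prod_mul_distrib]
          apply Finset.prod_congr rfl
          intro j' _
          ring
        rw [Finset.prod_congr rfl (fun j _ => this j), Finset.prod_mul_distrib,
          Finset.prod_pow_eq_pow_sum]
        have hsum : ∑ j : Fin M, (j : ℕ) = M * (M - 1) / 2 := by
          rw [Fin.sum_univ_eq_sum_range (fun i => i) M, Finset.sum_range_id]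
        rw [hsum]
        have : ∏ j : Fin M, ∏ j' ∈ Finset.Iio j, (ε j - ε j') = Vand ε := rfl
        rw [this]; ring

lemma vand_append {m M : ℕ} (z : Fin m → ℝ) (ε : Fin M → ℝ) :
    Vand (Fin.append z ε) = Vand z * Vand ε * ∏ b : Fin M, ∏ a : Fin m, (ε b - z a) := by
  have hIioC : ∀ a : Fin m,
      Finset.Iio (Fin.castAdd M a) = (Finset.Iio a).map (Fin.castAddEmb M) := by
    intro a; ext j
    simp only [Finset.mem_Iio, Finset.mem_map, Fin.castAddEmb_apply]
    constructor
    · intro hj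
      have hj' : (j : ℕ) < (a : ℕ) := hj
      exact ⟨⟨j, lt_trans hj' a.isLt⟩, hj', Fin.ext rfl⟩
    · rintro ⟨a', ha', rfl⟩
      exact ha'
  have hIioN : ∀ b : Fin M,
      Finset.Iio (Fin.natAdd m b)
        = (Finset.univ.map (Fin.castAddEmb M)) ∪ (Finset.Iio b).map (Fin.natAddEmb m) := by
    intro b; ext j
    simp only [Finset.mem_Iio, Finset.mem_union, Finset.mem_map, Fin.castAddEmb_apply,
      Fin.natAddEmb_apply, Finset.mem_univ, true_and]
    constructor
    · intro hj
      have hj' : (j : ℕ) < m + (b : ℕ) := hj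
      by_cases hcase : (j : ℕ) < m
      · exact Or.inl ⟨⟨j, hcase⟩, Fin.ext rfl⟩
      · refine Or.inr ⟨⟨(j : ℕ) - m, by omega⟩, ?_, ?_⟩
        · show (j : ℕ) - m < (b : ℕ)
          omega
        · exact Fin.ext (show m + ((j : ℕ) - m) = (j : ℕ) by omega)
    · rintro (⟨a', rfl⟩ | ⟨b', hb', rfl⟩)
      · show (a' : ℕ) < m + (b : ℕ)
        omega
      · have h1 : (b' : ℕ) < (b : ℕ) := hb'
        show m + (b' : ℕ) < m + (b : ℕ)
        omega
  have hdisj : ∀ b : Fin M,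
      Disjoint (Finset.univ.map (Fin.castAddEmb M)) ((Finset.Iio b).map (Fin.natAddEmb m)) := by
    intro b
    rw [Finset.disjoint_left]
    intro x hx1 hx2
    rw [Finset.mem_map] at hx1 hx2
    obtain ⟨a', -, ha'⟩ := hx1
    obtain ⟨b', -, hb'⟩ := hx2
    rw [← hb'] at ha'
    have := congrArg (fun t : Fin (m + M) => (t : ℕ)) ha'
    have h2 : (a' : ℕ) = m + (b' : ℕ) := this
    omega
  rw [Vand, Fin.prod_univ_add]
  have h1 : ∀ a : Fin m,
      (∏ j ∈ Finset.Iio (Fin.castAdd M a),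
        (Fin.append z ε (Fin.castAdd M a) - Fin.append z ε j))
        = ∏ a' ∈ Finset.Iio a, (z a - z a') := by
    intro a
    rw [hIioC a, Finset.prod_map]
    apply Finset.prod_congr rfl
    intro a' _
    rw [show ((Fin.castAddEmb M) a') = Fin.castAdd M a' from rfl, Fin.append_left,
      Fin.append_left]
  have h2 : ∀ b : Fin M,
      (∏ j ∈ Finset.Iio (Fin.natAdd m b),
        (Fin.append z ε (Fin.natAdd m b) - Fin.append z ε j))
        = (∏ a : Fin m, (ε b - z a)) * ∏ b' ∈ Finset.Iio b, (ε b - ε b') := by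
    intro b
    rw [hIioN b, Finset.prod_union (hdisj b), Finset.prod_map, Finset.prod_map]
    congr 1
    · apply Finset.prod_congr rfl
      intro a _
      rw [show ((Fin.castAddEmb M) a) = Fin.castAdd M a from rfl, Fin.append_right,
        Fin.append_left]
    · apply Finset.prod_congr rfl
      intro b' _
      rw [show ((Fin.natAddEmb m) b') = Fin.natAdd m b' from rfl, Fin.append_right,
        Fin.append_right]
  rw [Finset.prod_congr rfl (fun a _ => h1 a), Finset.prod_congr rfl (fun b _ => h2 b),
    Finset.prod_mul_distrib]
  rw [show (∏ a : Fin m, ∏ a' ∈ Finset.Iio a, (z a - z a')) = Vand z from rfl,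
    show (∏ b : Fin M, ∏ b' ∈ Finset.Iio b, (ε b - ε b')) = Vand ε from rfl]
  ring
noncomputable def Qpoly {M : ℕ} (ε : Fin M → ℝ) : Polynomial ℝ :=
  ∏ j, (Polynomial.C (ε j) - Polynomial.X)

noncomputable def ppoly {M : ℕ} (ε : Fin M → ℝ) (j : Fin M) : Polynomial ℝ :=
  ∏ j' ∈ Finset.univ.erase j, (Polynomial.C (ε j') - Polynomial.X)

noncomputable def gcol {M : ℕ} (m : ℕ) (π : ℕ → Polynomial ℝ) (ε : Fin M → ℝ) :
    Fin m ⊕ Fin M → Polynomial ℝ :=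
  Sum.elim (fun k => π (k : ℕ) * Qpoly ε) (fun j => ppoly ε j)

lemma CsubX_natDegree (a : ℝ) : (Polynomial.C a - Polynomial.X).natDegree = 1 := by
  rw [show Polynomial.C a - Polynomial.X = -(Polynomial.X - Polynomial.C a) by ring,
    Polynomial.natDegree_neg, Polynomial.natDegree_X_sub_C]

lemma CsubX_ne (a : ℝ) : (Polynomial.C a - Polynomial.X) ≠ 0 := by
  intro hzero
  have := CsubX_natDegree a
  rw [hzero] at this
  simp at this

lemma Qpoly_natDegree {M : ℕ} (ε : Fin M → ℝ) : (Qpoly ε).natDegree = M := by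
  rw [Qpoly, Polynomial.natDegree_prod _ _ (fun j _ => CsubX_ne (ε j))]
  simp [CsubX_natDegree]

lemma Qpoly_ne_zero {M : ℕ} (ε : Fin M → ℝ) : Qpoly ε ≠ 0 :=
  Finset.prod_ne_zero_iff.2 fun j _ => CsubX_ne (ε j)

lemma Qpoly_eval {M : ℕ} (ε : Fin M → ℝ) (t : ℝ) :
    (Qpoly ε).eval t = ∏ j, (ε j - t) := by
  simp [Qpoly, Polynomial.eval_prod]

lemma ppoly_eval {M : ℕ} (ε : Fin M → ℝ) (j : Fin M) (t : ℝ) :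
    (ppoly ε j).eval t = ∏ j' ∈ Finset.univ.erase j, (ε j' - t) := by
  simp [ppoly, Polynomial.eval_prod]

lemma ppoly_natDegree {M : ℕ} (ε : Fin M → ℝ) (j : Fin M) :
    (ppoly ε j).natDegree = M - 1 := by
  rw [ppoly, Polynomial.natDegree_prod _ _ (fun j' _ => CsubX_ne (ε j'))]
  simp only [CsubX_natDegree]
  rw [Finset.sum_const, smul_eq_mul, mul_one, Finset.card_erase_of_mem (Finset.mem_univ j),
    Finset.card_univ, Fintype.card_fin]

lemma Qpoly_eq {M : ℕ} (ε : Fin M → ℝ) (j : Fin M) :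
    Qpoly ε = (Polynomial.C (ε j) - Polynomial.X) * ppoly ε j :=
  (Finset.mul_prod_erase Finset.univ _ (Finset.mem_univ j)).symm

lemma key_coeff_det {m M : ℕ} (hM : 1 ≤ M) (π : ℕ → Polynomial ℝ)
    (hmonic : ∀ j, (π j).Monic) (hdeg : ∀ j, (π j).natDegree = j)
    (ε : Fin M → ℝ) (hε : Function.Injective ε) :
    Matrix.det (Matrix.of fun d c : Fin (m + M) =>
        (gcol m π ε (finSumFinEquiv.symm c)).coeff d)
      = (-1 : ℝ) ^ (M * (M - 1) / 2) * Vand ε := by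
  classical
  set R : ℝ := 1 + ∑ j, |ε j| with hR
  set z : Fin m → ℝ := fun a => R + ((a : ℕ) : ℝ) with hz
  have hεR : ∀ b : Fin M, ε b < R := by
    intro b
    have h1 : ε b ≤ |ε b| := le_abs_self _
    have h2 : |ε b| ≤ ∑ j, |ε j| :=
      Finset.single_le_sum (f := fun j => |ε j|) (fun j _ => abs_nonneg _) (Finset.mem_univ b)
    rw [hR]; linarith
  have hεz : ∀ (b : Fin M) (a : Fin m), ε b < z a := by
    intro b a
    have : (0 : ℝ) ≤ ((a : ℕ) : ℝ) := Nat.cast_nonneg _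
    have := hεR b
    simp only [hz]
    linarith
  have hzinj : Function.Injective z := by
    intro a a' haa
    simp only [hz] at haa
    have : ((a : ℕ) : ℝ) = ((a' : ℕ) : ℝ) := by linarith
    exact Fin.ext (Nat.cast_injective this)
  set g : Fin (m + M) → Polynomial ℝ := fun c => gcol m π ε (finSumFinEquiv.symm c) with hg
  have hgdeg : ∀ c, (g c).natDegree < m + M := by
    intro c
    show (gcol m π ε (finSumFinEquiv.symm c)).natDegree < m + M
    obtain ⟨s, rfl⟩ := finSumFinEquiv.surjective c
    rw [Equiv.symm_apply_apply]
    rcases s with k | j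
    · show (π (k : ℕ) * Qpoly ε).natDegree < m + M
      rw [Polynomial.natDegree_mul (hmonic (k : ℕ)).ne_zero (Qpoly_ne_zero ε), hdeg,
        Qpoly_natDegree]
      have := k.isLt
      omega
    · show (ppoly ε j).natDegree < m + M
      rw [ppoly_natDegree]
      omega
  set y : Fin (m + M) → ℝ := Fin.append z ε with hy
  have happend : ∀ i, y i = Sum.elim z ε (finSumFinEquiv.symm i) := by
    intro i
    obtain ⟨s, rfl⟩ := finSumFinEquiv.surjective i
    rcases s with a | b
    · rw [Equiv.symm_apply_apply]
      show y (finSumFinEquiv (Sum.inl a)) = z a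
      rw [finSumFinEquiv_apply_left, hy, Fin.append_left]
    · rw [Equiv.symm_apply_apply]
      show y (finSumFinEquiv (Sum.inr b)) = ε b
      rw [finSumFinEquiv_apply_right, hy, Fin.append_right]
  set F : Matrix (Fin m ⊕ Fin M) (Fin m ⊕ Fin M) ℝ :=
    fun s sc => (gcol m π ε sc).eval (Sum.elim z ε s) with hF
  have hsub : (Matrix.of fun i c => (g c).eval (y i)) = F.submatrix finSumFinEquiv.symm
      finSumFinEquiv.symm := by
    ext i c
    rw [Matrix.submatrix_apply, hF, Matrix.of_apply, happend i, hg]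
  have hdetF : Matrix.det (Matrix.of fun i c => (g c).eval (y i)) = F.det := by
    rw [hsub]
    exact Matrix.det_submatrix_equiv_self _ _
  -- F is block triangular
  have hFblocks : F = Matrix.fromBlocks
      (Matrix.of fun a k : Fin m => (Qpoly ε).eval (z a) * (π (k : ℕ)).eval (z a))
      (Matrix.of fun (a : Fin m) (j : Fin M) => (ppoly ε j).eval (z a))
      (0 : Matrix (Fin M) (Fin m) ℝ)
      (Matrix.diagonal fun j => (ppoly ε j).eval (ε j)) := by
    ext s sc
    rcases s with a | b <;> rcases sc with k | j
    · show (π (k : ℕ) * Qpoly ε).eval (z a) = _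
      simp [Matrix.fromBlocks, mul_comm]
    · simp [hF, Matrix.fromBlocks, gcol]
    · show (π (k : ℕ) * Qpoly ε).eval (ε b) = _
      have : (Qpoly ε).eval (ε b) = 0 := by
        rw [Qpoly_eval]
        exact Finset.prod_eq_zero (Finset.mem_univ b) (by ring)
      simp [this, Matrix.fromBlocks]
    · show (ppoly ε j).eval (ε b) = _
      by_cases hbj : b = j
      · subst hbj
        simp [Matrix.fromBlocks, Matrix.diagonal]
      · have : (ppoly ε j).eval (ε b) = 0 := by
          rw [ppoly_eval]
          exact Finset.prod_eq_zero (Finset.mem_erase.2 ⟨hbj, Finset.mem_univ b⟩) (by ring)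
        simp [this, Matrix.fromBlocks, Matrix.diagonal, hbj]
  have hdetF2 : F.det = ((∏ a, (Qpoly ε).eval (z a)) * Vand z)
      * ((-1 : ℝ) ^ (M * (M - 1) / 2) * Vand ε ^ 2) := by
    rw [hFblocks, Matrix.det_fromBlocks_zero₂₁]
    congr 1
    · rw [show (Matrix.of fun a k : Fin m => (Qpoly ε).eval (z a) * (π (k : ℕ)).eval (z a))
          = Matrix.of fun a k : Fin m => ((fun a => (Qpoly ε).eval (z a)) a)
            * ((Matrix.of fun a k : Fin m => (π (k : ℕ)).eval (z a)) a k) from rfl,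
        Matrix.det_mul_column, det_pi_eval π hmonic hdeg]
    · rw [Matrix.det_diagonal]
      have : ∀ j, (ppoly ε j).eval (ε j) = ∏ j' ∈ Finset.univ.erase j, (ε j' - ε j) :=
        fun j => ppoly_eval ε j (ε j)
      rw [Finset.prod_congr rfl (fun j _ => this j), prod_erase_eq]
  have hQz : ∏ a, (Qpoly ε).eval (z a) = ∏ b : Fin M, ∏ a : Fin m, (ε b - z a) := by
    rw [Finset.prod_congr rfl (fun a _ => Qpoly_eval ε (z a))]
    exact Finset.prod_comm
  -- combine with det_eval
  have hmain := det_eval g hgdeg y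
  rw [hdetF, hdetF2, hQz] at hmain
  have hVy : Vand y = Vand z * Vand ε * ∏ b : Fin M, ∏ a : Fin m, (ε b - z a) :=
    vand_append z ε
  rw [hVy] at hmain
  set P : ℝ := ∏ b : Fin M, ∏ a : Fin m, (ε b - z a) with hP
  have hPne : P ≠ 0 := by
    rw [hP]
    apply Finset.prod_ne_zero_iff.2
    intro b _
    apply Finset.prod_ne_zero_iff.2
    intro a _
    exact sub_ne_zero_of_ne (ne_of_lt (hεz b a))
  have hzne : Vand z ≠ 0 := vand_ne_zero hzinj
  have hεne : Vand ε ≠ 0 := vand_ne_zero hε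
  apply mul_left_cancel₀ (mul_ne_zero (mul_ne_zero hzne hεne) hPne)
  calc (Vand z * Vand ε * P) * Matrix.det (Matrix.of fun d c : Fin (m + M) =>
        (gcol m π ε (finSumFinEquiv.symm c)).coeff d)
      = Vand z * Vand ε * P * Matrix.det (Matrix.of fun d c => (g c).coeff d) := rfl
    _ = P * Vand z * ((-1 : ℝ) ^ (M * (M - 1) / 2) * Vand ε ^ 2) := by
        rw [← mul_assoc] at hmain
        linarith [hmain]
    _ = (Vand z * Vand ε * P) * ((-1 : ℝ) ^ (M * (M - 1) / 2) * Vand ε) := by ring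
lemma andreief {n : ℕ} (μ : Measure ℝ) [IsFiniteMeasure μ] (f g : Fin n → ℝ → ℝ)
    (hfm : ∀ c, Measurable (f c)) (hgm : ∀ k, Measurable (g k))
    (hfb : ∀ c, ∃ B, ∀ᵐ t ∂μ, |f c t| ≤ B) (hgb : ∀ k, ∃ B, ∀ᵐ t ∂μ, |g k t| ≤ B) :
    ∫ x : Fin n → ℝ, (Matrix.det (Matrix.of fun i c => f c (x i)))
        * Matrix.det (Matrix.of fun i k => g k (x i)) ∂(Measure.pi fun _ => μ)
      = (Nat.factorial n : ℝ) * Matrix.det (Matrix.of fun c k => ∫ t, f c t * g k t ∂μ) := by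
  classical
  have hInt : ∀ c k, Integrable (fun t => f c t * g k t) μ := by
    intro c k
    obtain ⟨B1, hB1⟩ := hfb c
    obtain ⟨B2, hB2⟩ := hgb k
    apply Integrable.mono' (integrable_const ((max B1 0) * (max B2 0)))
      ((hfm c).mul (hgm k)).aestronglyMeasurable
    filter_upwards [hB1, hB2] with t h1 h2
    rw [Real.norm_eq_abs, Pi.mul_apply, abs_mul]
    exact mul_le_mul (le_trans h1 (le_max_left _ _)) (le_trans h2 (le_max_left _ _))
      (abs_nonneg _) (le_max_of_le_left (le_trans (abs_nonneg _) h1))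
  letI : MeasureSpace ℝ := ⟨μ⟩
  have hvol : (volume : Measure ℝ) = μ := rfl
  haveI : SigmaFinite (volume : Measure ℝ) := by rw [hvol]; infer_instance
  have hpi : (Measure.pi fun _ : Fin n => μ) = (volume : Measure (Fin n → ℝ)) := rfl
  -- pointwise expansion of the product of determinants
  have hdet : ∀ x : Fin n → ℝ,
      (Matrix.det (Matrix.of fun i c => f c (x i)))
        * Matrix.det (Matrix.of fun i k => g k (x i))
      = ∑ σ : Equiv.Perm (Fin n), ∑ τ : Equiv.Perm (Fin n),
          (((Equiv.Perm.sign σ : ℤ) : ℝ) * ((Equiv.Perm.sign τ : ℤ) : ℝ))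
            * ∏ i, (f (σ⁻¹ i) (x i) * g (τ⁻¹ i) (x i)) := by
    intro x
    rw [Matrix.det_apply', Matrix.det_apply', Finset.sum_mul_sum]
    apply Finset.sum_congr rfl
    intro σ _
    apply Finset.sum_congr rfl
    intro τ _
    have h1 : ∏ i, (Matrix.of fun i c => f c (x i)) (σ i) i
        = ∏ i, f (σ⁻¹ i) (x i) := by
      rw [← Equiv.prod_comp σ (fun i => f (σ⁻¹ i) (x i))]
      apply Finset.prod_congr rfl
      intro i _
      simp
    have h2 : ∏ i, (Matrix.of fun i k => g k (x i)) (τ i) i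
        = ∏ i, g (τ⁻¹ i) (x i) := by
      rw [← Equiv.prod_comp τ (fun i => g (τ⁻¹ i) (x i))]
      apply Finset.prod_congr rfl
      intro i _
      simp
    rw [h1, h2, Finset.prod_mul_distrib]
    ring
  rw [MeasureTheory.integral_congr_ae (Filter.Eventually.of_forall hdet)]
  have hIntTerm : ∀ (σ τ : Equiv.Perm (Fin n)),
      Integrable (fun x : Fin n → ℝ => ∏ i, (f (σ⁻¹ i) (x i) * g (τ⁻¹ i) (x i)))
        (Measure.pi fun _ => μ) := by
    intro σ τ
    rw [hpi]
    exact Integrable.fintype_prod (f := fun i t => f (σ⁻¹ i) t * g (τ⁻¹ i) t)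
      (fun i => hInt _ _)
  have hswap : ∫ x : Fin n → ℝ, (∑ σ : Equiv.Perm (Fin n), ∑ τ : Equiv.Perm (Fin n),
      (((Equiv.Perm.sign σ : ℤ) : ℝ) * ((Equiv.Perm.sign τ : ℤ) : ℝ))
        * ∏ i, (f (σ⁻¹ i) (x i) * g (τ⁻¹ i) (x i))) ∂(Measure.pi fun _ => μ)
      = ∑ σ : Equiv.Perm (Fin n), ∑ τ : Equiv.Perm (Fin n),
          (((Equiv.Perm.sign σ : ℤ) : ℝ) * ((Equiv.Perm.sign τ : ℤ) : ℝ))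
            * ∏ i, ∫ t, f (σ⁻¹ i) t * g (τ⁻¹ i) t ∂μ := by
    rw [MeasureTheory.integral_finset_sum]
    · apply Finset.sum_congr rfl
      intro σ _
      rw [MeasureTheory.integral_finset_sum]
      · apply Finset.sum_congr rfl
        intro τ _
        rw [MeasureTheory.integral_const_mul]
        congr 1
        rw [hpi]
        exact MeasureTheory.integral_fintype_prod_eq_prod (ι := Fin n)
          (fun i t => f (σ⁻¹ i) t * g (τ⁻¹ i) t)
      · exact fun τ _ => (hIntTerm σ τ).const_mul _
    · intro σ _
      apply integrable_finset_sum
      exact fun τ _ => (hIntTerm σ τ).const_mul _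
  rw [hswap]
  -- now pure algebra over the sums of permutations
  set T : Matrix (Fin n) (Fin n) ℝ := Matrix.of fun c k => ∫ t, f c t * g k t ∂μ with hT
  have hstep : ∀ σ : Equiv.Perm (Fin n),
      (∑ τ : Equiv.Perm (Fin n), (((Equiv.Perm.sign σ : ℤ) : ℝ) * ((Equiv.Perm.sign τ : ℤ) : ℝ))
        * ∏ i, ∫ t, f (σ⁻¹ i) t * g (τ⁻¹ i) t ∂μ) = T.det := by
    intro σ
    rw [← Equiv.sum_comp (Equiv.mulLeft σ)]
    have : ∀ ρ : Equiv.Perm (Fin n),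
        ((((Equiv.Perm.sign σ : ℤ) : ℝ) * ((Equiv.Perm.sign (Equiv.mulLeft σ ρ) : ℤ) : ℝ))
          * ∏ i, ∫ t, f (σ⁻¹ i) t * g (((Equiv.mulLeft σ ρ)⁻¹) i) t ∂μ)
        = (((Equiv.Perm.sign ρ : ℤ) : ℝ)) * ∏ c, T c (ρ⁻¹ c) := by
      intro ρ
      have hsign : (((Equiv.Perm.sign σ : ℤ) : ℝ) * ((Equiv.Perm.sign (σ * ρ) : ℤ) : ℝ))
          = ((Equiv.Perm.sign ρ : ℤ) : ℝ) := by
        rw [Equiv.Perm.sign_mul, Units.val_mul, Int.cast_mul]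
        rcases Int.units_eq_one_or (Equiv.Perm.sign σ) with hu | hu <;> rw [hu] <;> norm_num
      have hinv : ∀ i, ((σ * ρ)⁻¹) i = ρ⁻¹ (σ⁻¹ i) := by
        intro i
        rw [_root_.mul_inv_rev]
        rfl
      have hprod : ∏ i, ∫ t, f (σ⁻¹ i) t * g (((σ * ρ)⁻¹) i) t ∂μ = ∏ c, T c (ρ⁻¹ c) := by
        rw [← Equiv.prod_comp σ⁻¹ (fun c => T c (ρ⁻¹ c))]
        apply Finset.prod_congr rfl
        intro i _
        rw [hinv i]
        rfl
      show (((Equiv.Perm.sign σ : ℤ) : ℝ) * ((Equiv.Perm.sign (σ * ρ) : ℤ) : ℝ))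
          * ∏ i, ∫ t, f (σ⁻¹ i) t * g (((σ * ρ)⁻¹) i) t ∂μ = _
      rw [hsign, hprod]
    rw [Finset.sum_congr rfl (fun ρ _ => this ρ)]
    -- ∑ ρ, sign ρ * ∏ c, T c (ρ⁻¹ c) = det T
    rw [← Equiv.sum_comp (Equiv.inv (Equiv.Perm (Fin n)))]
    have : ∀ ρ : Equiv.Perm (Fin n),
        (((Equiv.Perm.sign ((Equiv.inv (Equiv.Perm (Fin n))) ρ) : ℤ) : ℝ))
          * ∏ c, T c (((Equiv.inv (Equiv.Perm (Fin n))) ρ)⁻¹ c)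
        = (((Equiv.Perm.sign ρ : ℤ) : ℝ)) * ∏ c, Tᵀ (ρ c) c := by
      intro ρ
      have h1 : (Equiv.inv (Equiv.Perm (Fin n))) ρ = ρ⁻¹ := rfl
      rw [h1, Equiv.Perm.sign_inv, inv_inv]
      rfl
    rw [Finset.sum_congr rfl (fun ρ _ => this ρ), ← Matrix.det_apply', Matrix.det_transpose]
  rw [Finset.sum_congr rfl (fun σ _ => hstep σ), Finset.sum_const, Finset.card_univ,
    Fintype.card_perm, Fintype.card_fin, nsmul_eq_mul]
end FS

open FS

/-- Fyodorov–Strahov formula for averages of products of inverse characteristic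
polynomials. -/
theorem fyodorov_strahov_inverse_products (α : Measure ℝ) [IsFiniteMeasure α] (Q : ℝ)
    (hQ : α (Set.Icc (-Q) Q)ᶜ = 0)
    (hposdef : ∀ p : Polynomial ℝ, p ≠ 0 → 0 < ∫ t, (p.eval t) ^ 2 ∂α)
    (π : ℕ → Polynomial ℝ)
    (hmonic : ∀ j, (π j).Monic) (hdeg : ∀ j, (π j).natDegree = j)
    (horth : ∀ j k, j ≠ k → ∫ t, (π j).eval t * (π k).eval t ∂α = 0)
    -- norming constants and Cauchy transforms
    (c : ℕ → ℝ) (hc : ∀ j, (c j) ^ 2 = ∫ t, ((π j).eval t) ^ 2 ∂α)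
    (γ : ℕ → ℂ) (hγ : ∀ j, γ j = -(2 * (Real.pi : ℂ) * Complex.I) / (c j : ℂ) ^ 2)
    (h : ℕ → ℝ → ℂ)
    (hh : ∀ k e, h k e =
      (1 / (2 * (Real.pi : ℂ) * Complex.I)) *
        ∫ t, Complex.ofReal ((π k).eval t) / ((t : ℂ) - (e : ℂ)) ∂α)
    (M N : ℕ) (hM : 1 ≤ M) (hMN : M ≤ N)
    (ε : Fin M → ℝ) (hε : Function.Injective ε) (hεQ : ∀ i, Q < ε i)
    (Z : ℝ)
    (hZ : Z = ∫ x : Fin N → ℝ, (Vand x) ^ 2 ∂(Measure.pi fun _ => α)) :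
    Complex.ofReal
        ((1 / Z) * ∫ x : Fin N → ℝ, (∏ j : Fin M, ∏ i, (ε j - x i))⁻¹ * (Vand x) ^ 2
          ∂(Measure.pi fun _ => α))
      = (-1 : ℂ) ^ (M * (M - 1) / 2) *
          ((∏ j : Fin M, γ (N - M + j)) / Complex.ofReal (Vand ε)) *
          (Matrix.of fun i j : Fin M => h (N - M + j) (ε i)).det := by
  classical
  have hNM : (N - M) + M = N := Nat.sub_add_cancel hMN
  set e : (Fin (N - M) ⊕ Fin M) ≃ Fin N := finSumFinEquiv.trans (finCongr hNM) with he_def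
  set s : ℝ := (-1 : ℝ) ^ (M * (M - 1) / 2) with hs_def
  have hss : s * s = 1 := by
    rw [hs_def]
    rcases neg_one_pow_eq_or ℝ (M * (M - 1) / 2) with hp | hp <;> rw [hp] <;> norm_num
  have hsne : s ≠ 0 := by
    intro h0
    rw [h0, mul_zero] at hss
    norm_num at hss
  set F : (Fin (N - M) ⊕ Fin M) → ℝ → ℝ :=
    Sum.elim (fun k t => (π (k : ℕ)).eval t) (fun j t => (ε j - t)⁻¹) with hF_def
  set f : Fin N → ℝ → ℝ := fun cc => F (e.symm cc) with hf_def
  set g : Fin N → ℝ → ℝ := fun k t => (π (k : ℕ)).eval t with hg_def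
  have hval1 : ∀ k : Fin (N - M), ((e (Sum.inl k)) : ℕ) = (k : ℕ) := by
    intro k
    simp [he_def]
  have hval2 : ∀ j : Fin M, ((e (Sum.inr j)) : ℕ) = (N - M) + (j : ℕ) := by
    intro j
    simp [he_def]
  have hfe1 : ∀ k : Fin (N - M), f (e (Sum.inl k)) = fun t => (π (k : ℕ)).eval t := by
    intro k
    rw [hf_def]
    show F (e.symm (e (Sum.inl k))) = _
    rw [Equiv.symm_apply_apply]
    rfl
  have hfe2 : ∀ j : Fin M, f (e (Sum.inr j)) = fun t => (ε j - t)⁻¹ := by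
    intro j
    rw [hf_def]
    show F (e.symm (e (Sum.inr j))) = _
    rw [Equiv.symm_apply_apply]
    rfl
  -- a.e. bounds and measurability
  have haeIcc : ∀ᵐ t ∂α, t ∈ Set.Icc (-Q) Q := by
    rw [MeasureTheory.ae_iff]
    exact hQ
  have hbound_poly : ∀ p : Polynomial ℝ, ∃ B, ∀ᵐ t ∂α, |p.eval t| ≤ B := by
    intro p
    obtain ⟨B, hB⟩ := (isCompact_Icc (a := -Q) (b := Q)).exists_bound_of_continuousOn
      (p.continuous.continuousOn)
    exact ⟨B, haeIcc.mono fun t ht => by simpa [Real.norm_eq_abs] using hB t ht⟩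
  have hbound_inv : ∀ j : Fin M, ∃ B, ∀ᵐ t ∂α, |(ε j - t)⁻¹| ≤ B := by
    intro j
    refine ⟨(ε j - Q)⁻¹, haeIcc.mono fun t ht => ?_⟩
    have h1 : 0 < ε j - Q := sub_pos.2 (hεQ j)
    have h2 : ε j - Q ≤ ε j - t := by
      have := ht.2
      linarith
    rw [abs_of_pos (inv_pos.2 (lt_of_lt_of_le h1 h2))]
    exact inv_anti₀ h1 h2
  have hgm : ∀ k, Measurable (g k) := fun k => (Polynomial.continuous _).measurable
  have hgb : ∀ k, ∃ B, ∀ᵐ t ∂α, |g k t| ≤ B := fun k => hbound_poly _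
  have hfm : ∀ cc, Measurable (f cc) := by
    intro cc
    show Measurable (F (e.symm cc))
    rcases hsc : e.symm cc with k | j
    · show Measurable fun t => (π (k : ℕ)).eval t
      exact (Polynomial.continuous _).measurable
    · show Measurable fun t => (ε j - t)⁻¹
      exact ((continuous_const.sub continuous_id).measurable).inv
  have hfb : ∀ cc, ∃ B, ∀ᵐ t ∂α, |f cc t| ≤ B := by
    intro cc
    show ∃ B, ∀ᵐ t ∂α, |F (e.symm cc) t| ≤ B
    rcases hsc : e.symm cc with k | j
    · show ∃ B, ∀ᵐ t ∂α, |(π (k : ℕ)).eval t| ≤ B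
      exact hbound_poly _
    · show ∃ B, ∀ᵐ t ∂α, |(ε j - t)⁻¹| ≤ B
      exact hbound_inv j
  -- Andreief identities
  have hAnd1 := andreief α f g hfm hgm hfb hgb
  have hAnd2 := andreief α g g hgm hgm hgb hgb
  -- value of Z
  have hcpos : ∀ l : ℕ, 0 < (c l) ^ 2 := fun l => by
    rw [hc]
    exact hposdef _ (hmonic l).ne_zero
  have hZval : Z = (Nat.factorial N : ℝ) * ∏ k : Fin N, (c (k : ℕ)) ^ 2 := by
    rw [hZ]
    have hptZ : ∀ x : Fin N → ℝ, (Vand x) ^ 2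
        = Matrix.det (Matrix.of fun i k => g k (x i))
          * Matrix.det (Matrix.of fun i k => g k (x i)) := by
      intro x
      have hdetg : Matrix.det (Matrix.of fun i k => g k (x i)) = Vand x :=
        det_pi_eval π hmonic hdeg x
      rw [hdetg]
      ring
    rw [MeasureTheory.integral_congr_ae (Filter.Eventually.of_forall hptZ), hAnd2]
    congr 1
    have hdiag : (Matrix.of fun ck k : Fin N => ∫ t, g ck t * g k t ∂α)
        = Matrix.diagonal (fun k : Fin N => (c (k : ℕ)) ^ 2) := by
      ext a b
      by_cases hab : a = b
      · subst hab
        show ∫ t, g a t * g a t ∂α = _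
        have : (fun t => g a t * g a t) = fun t => ((π (a : ℕ)).eval t) ^ 2 := by
          funext t
          rw [hg_def]
          ring
        rw [this, ← hc]
        simp [Matrix.diagonal]
      · show ∫ t, g a t * g b t ∂α = _
        rw [hg_def]
        have h0 := horth (a : ℕ) (b : ℕ) (fun hval => hab (Fin.ext hval))
        simp only [Matrix.diagonal, Matrix.of_apply]
        rw [if_neg hab]
        exact h0
    rw [hdiag, Matrix.det_diagonal]
  -- abbreviate the main integral
  set I₀ : ℝ := ∫ x : Fin N → ℝ, (∏ j : Fin M, ∏ i, (ε j - x i))⁻¹ * (Vand x) ^ 2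
    ∂(Measure.pi fun _ => α) with hI₀_def
  -- the Gram matrix and its block structure
  set T : Matrix (Fin N) (Fin N) ℝ := Matrix.of (fun ck k => ∫ t, f ck t * g k t ∂α) with hT_def
  set Rmat : Matrix (Fin M) (Fin M) ℝ :=
    Matrix.of (fun j j' : Fin M => ∫ t, (ε j - t)⁻¹ * (π ((N - M) + (j' : ℕ))).eval t ∂α)
    with hR_def
  have hgv : ∀ kN : Fin N, g kN = fun t => (π (kN : ℕ)).eval t := fun kN => rfl
  have hTblock : T.submatrix e e = Matrix.fromBlocks
      (Matrix.diagonal fun k : Fin (N - M) => (c (k : ℕ)) ^ 2) 0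
      (Matrix.of fun (j : Fin M) (k : Fin (N - M)) => ∫ t, (ε j - t)⁻¹ * (π (k : ℕ)).eval t ∂α)
      Rmat := by
    ext a b
    rcases a with k | j <;> rcases b with k' | j'
    · simp only [Matrix.submatrix_apply, Matrix.fromBlocks_apply₁₁]
      show (∫ t, f (e (Sum.inl k)) t * g (e (Sum.inl k')) t ∂α) = _
      rw [hfe1 k, hgv (e (Sum.inl k')), hval1 k']
      by_cases hkk : k = k'
      · subst hkk
        rw [Matrix.diagonal_apply_eq]
        have : (fun t => (π (k : ℕ)).eval t * (π (k : ℕ)).eval t)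
            = fun t => ((π (k : ℕ)).eval t) ^ 2 := by
          funext t
          ring
        show (∫ t, (π (k : ℕ)).eval t * (π (k : ℕ)).eval t ∂α) = _
        rw [this, ← hc]
      · rw [Matrix.diagonal_apply_ne _ hkk]
        exact horth _ _ fun hv => hkk (Fin.ext hv)
    · simp only [Matrix.submatrix_apply, Matrix.fromBlocks_apply₁₂, Matrix.zero_apply]
      show (∫ t, f (e (Sum.inl k)) t * g (e (Sum.inr j')) t ∂α) = 0
      rw [hfe1 k, hgv (e (Sum.inr j')), hval2 j']
      refine horth _ _ fun hv => ?_
      have := k.isLt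
      omega
    · simp only [Matrix.submatrix_apply, Matrix.fromBlocks_apply₂₁, Matrix.of_apply]
      show (∫ t, f (e (Sum.inr j)) t * g (e (Sum.inl k')) t ∂α) = _
      rw [hfe2 j, hgv (e (Sum.inl k')), hval1 k']
    · simp only [Matrix.submatrix_apply, Matrix.fromBlocks_apply₂₂]
      show (∫ t, f (e (Sum.inr j)) t * g (e (Sum.inr j')) t ∂α) = Rmat j j'
      rw [hfe2 j, hgv (e (Sum.inr j')), hval2 j', hR_def]
      rfl
  have hdetT : T.det = (∏ k : Fin (N - M), (c (k : ℕ)) ^ 2) * Rmat.det := by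
    rw [← Matrix.det_submatrix_equiv_self e T, hTblock, Matrix.det_fromBlocks_zero₁₂,
      Matrix.det_diagonal]
  -- a.e. membership
  have haePi : ∀ᵐ x : Fin N → ℝ ∂(Measure.pi fun _ : Fin N => α),
      ∀ i, x i ∈ Set.Icc (-Q) Q := by
    rw [MeasureTheory.ae_all_iff]
    intro i
    rw [MeasureTheory.ae_iff]
    exact MeasureTheory.Measure.pi_eval_preimage_null (μ := fun _ : Fin N => α) hQ
  -- pointwise identity
  have hrel : ∀ x : Fin N → ℝ, (∀ i, x i ∈ Set.Icc (-Q) Q) →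
      s * Vand ε * ((∏ j : Fin M, ∏ i, (ε j - x i))⁻¹ * (Vand x) ^ 2)
        = Matrix.det (Matrix.of fun i cc => f cc (x i))
          * Matrix.det (Matrix.of fun i k => g k (x i)) := by
    intro x hx
    have hne : ∀ (i : Fin N) (j : Fin M), ε j - x i ≠ 0 := by
      intro i j
      have h1 := (hx i).2
      have h2 := hεQ j
      intro h0
      have := sub_eq_zero.1 h0
      linarith
    have hdetg : Matrix.det (Matrix.of fun i k => g k (x i)) = Vand x :=
      det_pi_eval π hmonic hdeg x
    have hQx : ∀ i, (Qpoly ε).eval (x i) ≠ 0 := by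
      intro i
      rw [Qpoly_eval]
      exact Finset.prod_ne_zero_iff.2 fun j _ => hne i j
    have hgf : ∀ (i : Fin N) (cc : Fin N),
        (gcol (N - M) π ε (e.symm cc)).eval (x i) = (Qpoly ε).eval (x i) * f cc (x i) := by
      intro i cc
      show _ = _ * F (e.symm cc) (x i)
      rcases e.symm cc with k | j
      · show (π (k : ℕ) * Qpoly ε).eval (x i) = (Qpoly ε).eval (x i) * (π (k : ℕ)).eval (x i)
        rw [Polynomial.eval_mul]
        ring
      · show (ppoly ε j).eval (x i) = (Qpoly ε).eval (x i) * (ε j - x i)⁻¹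
        have hQfact : (Qpoly ε).eval (x i) = (ε j - x i) * (ppoly ε j).eval (x i) := by
          rw [Qpoly_eq ε j, Polynomial.eval_mul]
          simp
        rw [hQfact, mul_comm (ε j - x i) _, mul_assoc, mul_inv_cancel₀ (hne i j), mul_one]
    have hgdegN : ∀ cc : Fin N, (gcol (N - M) π ε (e.symm cc)).natDegree < N := by
      intro cc
      rcases e.symm cc with k | j
      · show (π (k : ℕ) * Qpoly ε).natDegree < N
        rw [Polynomial.natDegree_mul (hmonic _).ne_zero (Qpoly_ne_zero ε), hdeg,
          Qpoly_natDegree]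
        have := k.isLt
        omega
      · show (ppoly ε j).natDegree < N
        rw [ppoly_natDegree]
        omega
    have hdeteval := det_eval (fun cc => gcol (N - M) π ε (e.symm cc)) hgdegN x
    have hcoeff : Matrix.det (Matrix.of fun d cc : Fin N =>
        (gcol (N - M) π ε (e.symm cc)).coeff d) = s * Vand ε := by
      have hsub : (Matrix.of fun d cc : Fin N =>
            (gcol (N - M) π ε (e.symm cc)).coeff d).submatrix (finCongr hNM) (finCongr hNM)
          = Matrix.of (fun d cc : Fin ((N - M) + M) =>
              (gcol (N - M) π ε (finSumFinEquiv.symm cc)).coeff d) := by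
        ext d cc
        simp only [Matrix.submatrix_apply, Matrix.of_apply]
        rw [show e.symm (finCongr hNM cc) = finSumFinEquiv.symm cc from by
          simp [he_def]]
        simp
      have hsm := Matrix.det_submatrix_equiv_self (finCongr hNM)
        (Matrix.of fun d cc : Fin N => (gcol (N - M) π ε (e.symm cc)).coeff d)
      rw [hsub] at hsm
      rw [← hsm, key_coeff_det hM π hmonic hdeg ε hε, hs_def]
    have h3 : Matrix.det (Matrix.of fun i cc => (gcol (N - M) π ε (e.symm cc)).eval (x i))
        = (∏ i, (Qpoly ε).eval (x i)) * Matrix.det (Matrix.of fun i cc => f cc (x i)) := by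
      rw [show (Matrix.of fun i cc => (gcol (N - M) π ε (e.symm cc)).eval (x i))
          = Matrix.of (fun i cc => (Qpoly ε).eval (x i)
              * (Matrix.of fun i cc => f cc (x i)) i cc) from by
        ext i cc
        exact hgf i cc]
      exact Matrix.det_mul_column (fun i => (Qpoly ε).eval (x i)) _
    have hdet2 : (∏ i, (Qpoly ε).eval (x i)) * Matrix.det (Matrix.of fun i cc => f cc (x i))
        = Vand x * (s * Vand ε) := by
      rw [← h3, hdeteval, hcoeff]
    have hprodQ : (∏ j : Fin M, ∏ i, (ε j - x i)) = ∏ i, (Qpoly ε).eval (x i) := by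
      rw [Finset.prod_comm]
      exact Finset.prod_congr rfl fun i _ => (Qpoly_eval ε (x i)).symm
    have hPne : (∏ i, (Qpoly ε).eval (x i)) ≠ 0 := Finset.prod_ne_zero_iff.2 fun i _ => hQx i
    rw [hdetg, hprodQ]
    field_simp
    linear_combination (-(Vand x)) * hdet2
  have hptwise : (fun x : Fin N → ℝ =>
        s * Vand ε * ((∏ j : Fin M, ∏ i, (ε j - x i))⁻¹ * (Vand x) ^ 2))
      =ᵐ[Measure.pi fun _ : Fin N => α]
      (fun x => Matrix.det (Matrix.of fun i cc => f cc (x i))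
        * Matrix.det (Matrix.of fun i k => g k (x i))) :=
    haePi.mono fun x hx => hrel x hx
  have hsI : s * Vand ε * I₀
      = (Nat.factorial N : ℝ) * ((∏ k : Fin (N - M), (c (k : ℕ)) ^ 2) * Rmat.det) := by
    rw [hI₀_def, ← MeasureTheory.integral_const_mul,
      MeasureTheory.integral_congr_ae hptwise, hAnd1, ← hdetT]
  -- complexification
  set w : ℂ := -(2 * (Real.pi : ℂ) * Complex.I) with hw_def
  have h2πI : (2 * (Real.pi : ℂ) * Complex.I) ≠ 0 := by
    simp [Real.pi_ne_zero, Complex.I_ne_zero, Complex.ofReal_ne_zero]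
  have hentry : ∀ (kk : ℕ) (j : Fin M),
      (Complex.ofReal (∫ t, (ε j - t)⁻¹ * (π kk).eval t ∂α)) = w * h kk (ε j) := by
    intro kk j
    have hfun : (fun t => (ε j - t)⁻¹ * (π kk).eval t)
        = fun t => -((π kk).eval t / (t - ε j)) := by
      funext t
      rw [show ε j - t = -(t - ε j) by ring, inv_neg, div_eq_mul_inv]
      ring
    have hcfun : (fun t : ℝ => (Complex.ofReal ((π kk).eval t)) / ((t : ℂ) - ((ε j : ℝ) : ℂ)))
        = fun t : ℝ => Complex.ofReal ((π kk).eval t / (t - ε j)) := by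
      funext t
      rw [Complex.ofReal_div, Complex.ofReal_sub]
    have hint : (∫ t, Complex.ofReal ((π kk).eval t) / ((t : ℂ) - ((ε j : ℝ) : ℂ)) ∂α)
        = Complex.ofReal (∫ t, (π kk).eval t / (t - ε j) ∂α) := by
      rw [hcfun]
      exact integral_ofReal
    have hhv := hh kk (ε j)
    rw [hint] at hhv
    rw [hfun, MeasureTheory.integral_neg, Complex.ofReal_neg, hhv, hw_def]
    field_simp
  set Hmat : Matrix (Fin M) (Fin M) ℂ :=
    Matrix.of (fun i j : Fin M => h (N - M + (j : ℕ)) (ε i)) with hH_def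
  have hdetR : Complex.ofReal Rmat.det = w ^ M * Hmat.det := by
    have h1 : Complex.ofRealHom Rmat.det = ((Rmat.map Complex.ofRealHom).det) :=
      RingHom.map_det Complex.ofRealHom Rmat
    have h2 : Rmat.map Complex.ofRealHom = w • Hmat := by
      ext i j
      simp only [Matrix.map_apply, Matrix.smul_apply, hH_def, Matrix.of_apply, smul_eq_mul,
        hR_def]
      exact hentry ((N - M) + (j : ℕ)) i
    rw [show Complex.ofReal Rmat.det = Complex.ofRealHom Rmat.det from rfl, h1, h2,
      Matrix.det_smul, Fintype.card_fin]
  have hγprod : (∏ j : Fin M, γ (N - M + (j : ℕ)))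
      = w ^ M / Complex.ofReal (∏ j : Fin M, (c ((N - M) + (j : ℕ))) ^ 2) := by
    rw [Finset.prod_congr rfl (fun (j : Fin M) _ => hγ ((N - M) + (j : ℕ)))]
    rw [Finset.prod_div_distrib, Finset.prod_const, Finset.card_univ, Fintype.card_fin]
    rw [Complex.ofReal_prod]
    congr 1
    apply Finset.prod_congr rfl
    intro j _
    rw [Complex.ofReal_pow]
  have hsplit : (∏ k : Fin N, (c (k : ℕ)) ^ 2)
      = (∏ k : Fin (N - M), (c (k : ℕ)) ^ 2) * ∏ j : Fin M, (c ((N - M) + (j : ℕ))) ^ 2 := by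
    rw [← Equiv.prod_comp e (fun kN : Fin N => (c (kN : ℕ)) ^ 2), Fintype.prod_sum_type]
    congr 1
    all_goals first
      | exact Finset.prod_congr rfl fun k _ => by rw [hval1 k]
      | exact Finset.prod_congr rfl fun j _ => by rw [hval2 j]
  have hcQpos : 0 < ∏ k : Fin (N - M), (c (k : ℕ)) ^ 2 := Finset.prod_pos fun k _ => hcpos _
  have hcPpos : 0 < ∏ j : Fin M, (c ((N - M) + (j : ℕ))) ^ 2 :=
    Finset.prod_pos fun j _ => hcpos _
  have hNfacne : (Nat.factorial N : ℝ) ≠ 0 := Nat.cast_ne_zero.2 (Nat.factorial_ne_zero N)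
  have hVεne : Vand ε ≠ 0 := vand_ne_zero hε
  have hIval : (1 / Z) * I₀
      = s * Rmat.det / (Vand ε * ∏ j : Fin M, (c ((N - M) + (j : ℕ))) ^ 2) := by
    have hI2 : I₀ = s * ((Nat.factorial N : ℝ)
        * ((∏ k : Fin (N - M), (c (k : ℕ)) ^ 2) * Rmat.det)) / Vand ε := by
      rw [eq_div_iff hVεne]
      linear_combination s * hsI - (I₀ * Vand ε) * hss
    rw [hZval, hsplit, hI2]
    field_simp
  rw [hIval, Complex.ofReal_div, Complex.ofReal_mul, hdetR, Complex.ofReal_mul]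
  rw [show ((s : ℝ) : ℂ) = (-1 : ℂ) ^ (M * (M - 1) / 2) from by rw [hs_def]; push_cast; ring]
  rw [hγprod]
  have hVεCne : (Complex.ofReal (Vand ε)) ≠ 0 := Complex.ofReal_ne_zero.2 hVεne
  have hcPCne : (Complex.ofReal (∏ j : Fin M, (c ((N - M) + (j : ℕ))) ^ 2)) ≠ 0 :=
    Complex.ofReal_ne_zero.2 (ne_of_gt hcPpos)
  show _ = (-1 : ℂ) ^ (M * (M - 1) / 2) * (_ / Complex.ofReal (Vand ε)) * Hmat.det
  field_simp
end
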